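/- arXiv:2105.06074 — 5 statements merged into one kernel-verified Lean document; each statement's English description precedes it below -/
import Mathlib

section
/- The character polynomial is a local invariant: if U, V ∈ SU(4) and there exist single-qubit unitaries A₁, A₂, B₁, B₂ ∈ SU(2) with U = (A₁ ⊗ A₂) V (B₁ ⊗ B₂), then F_U(t) = F_V(t) for all real t, where F_U(t) = det(Re(M†UM) + t·Im(M†UM)) and M is the magic basis change matrix. -/
open Complex Matrix

/-- Kronecker product of two 2×2 matrices as a 4×4 matrix, basis order |00⟩,|01⟩,|10⟩,|11⟩. -/
def kron (A B : Matrix (Fin 2) (Fin 2) ℂ) : Matrix (Fin 4) (Fin 4) ℂ :=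
  !![A 0 0 * B 0 0, A 0 0 * B 0 1, A 0 1 * B 0 0, A 0 1 * B 0 1;
     A 0 0 * B 1 0, A 0 0 * B 1 1, A 0 1 * B 1 0, A 0 1 * B 1 1;
     A 1 0 * B 0 0, A 1 0 * B 0 1, A 1 1 * B 0 0, A 1 1 * B 0 1;
     A 1 0 * B 1 0, A 1 0 * B 1 1, A 1 1 * B 1 0, A 1 1 * B 1 1]

/-- The magic basis change matrix. -/
noncomputable def magicM : Matrix (Fin 4) (Fin 4) ℂ :=
  ((1 : ℂ) / Real.sqrt 2) •
  !![1, 0, 0, I;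
     0, I, 1, 0;
     0, I, -1, 0;
     1, 0, 0, -I]

/-- The character polynomial F_U(t) = det(Re(M†UM) + t·Im(M†UM)). -/
noncomputable def charPoly (U : Matrix (Fin 4) (Fin 4) ℂ) (t : ℝ) : ℝ :=
  (((magicMᴴ * U * magicM).map Complex.re) + t • ((magicMᴴ * U * magicM).map Complex.im)).det

lemma sqrt2_sq : ((Real.sqrt 2 : ℂ)) * ((Real.sqrt 2 : ℂ)) = 2 := by
  rw [← Complex.ofReal_mul, Real.mul_self_sqrt (by norm_num)]; norm_num

lemma magic_unitary : magicMᴴ * magicM = 1 := by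
  ext i j
  fin_cases i <;> fin_cases j <;>
    simp [magicM, Matrix.mul_apply, Fin.sum_univ_four, conjTranspose_apply, Matrix.one_apply] <;>
    field_simp <;> simp [pow_two, sqrt2_sq] <;> norm_num

lemma magic_unitary' : magicM * magicMᴴ = 1 := by
  ext i j
  fin_cases i <;> fin_cases j <;>
    simp [magicM, Matrix.mul_apply, Fin.sum_univ_four, conjTranspose_apply, Matrix.one_apply] <;>
    field_simp <;> simp [pow_two, sqrt2_sq] <;> norm_num

lemma magic_cancel (X : Matrix (Fin 4) (Fin 4) ℂ) : magicM * (magicMᴴ * X) = X := by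
  rw [← Matrix.mul_assoc, magic_unitary', Matrix.one_mul]

lemma su2_form (A : Matrix (Fin 2) (Fin 2) ℂ) (hA : Aᴴ * A = 1) (hdet : A.det = 1) :
    A 1 1 = (starRingEnd ℂ) (A 0 0) ∧ A 1 0 = -((starRingEnd ℂ) (A 0 1)) := by
  have hinv : A⁻¹ = Aᴴ := Matrix.inv_eq_left_inv hA
  have hadj : A⁻¹ = A.adjugate := by
    rw [Matrix.inv_def, hdet]; simp
  rw [hinv] at hadj
  rw [Matrix.adjugate_fin_two] at hadj
  constructor
  · have := congrFun (congrFun hadj 0) 0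
    simpa [conjTranspose_apply] using this.symm
  · have := congrFun (congrFun hadj 1) 0
    simp [conjTranspose_apply] at this
    rw [this]; ring

set_option maxHeartbeats 2000000 in
lemma real_magic (A B : Matrix (Fin 2) (Fin 2) ℂ)
    (hA11 : A 1 1 = (starRingEnd ℂ) (A 0 0)) (hA10 : A 1 0 = -((starRingEnd ℂ) (A 0 1)))
    (hB11 : B 1 1 = (starRingEnd ℂ) (B 0 0)) (hB10 : B 1 0 = -((starRingEnd ℂ) (B 0 1))) :
    ∀ i j, ((magicMᴴ * (kron A B * magicM)) i j).im = 0 := by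
  intro i j
  rw [← Complex.conj_eq_iff_im]
  fin_cases i <;> fin_cases j <;>
    simp [magicM, kron, Matrix.mul_apply, Fin.sum_univ_four, conjTranspose_apply,
      hA11, hA10, hB11, hB10, _root_.map_add, _root_.map_mul, _root_.map_sub,
      Complex.conj_ofReal] <;>
    ring

lemma kron_det (A B : Matrix (Fin 2) (Fin 2) ℂ) :
    (kron A B).det = A.det ^ 2 * B.det ^ 2 := by
  simp [kron, Matrix.det_succ_row_zero, Fin.sum_univ_succ, Matrix.det_fin_three,
    Matrix.det_fin_two, Fin.succAbove, Matrix.submatrix_apply,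
    show ((1:Fin 4) < Fin.succ 2) from by decide, show ((2:Fin 4) < Fin.succ 2) from by decide,
    show Fin.castSucc (2:Fin 3) = (2:Fin 4) from by decide]
  ring

lemma map_re_mul_left (P X : Matrix (Fin 4) (Fin 4) ℂ) (hP : ∀ i j, (P i j).im = 0) :
    (P * X).map Complex.re = P.map Complex.re * X.map Complex.re := by
  ext i j
  simp only [Matrix.map_apply, Matrix.mul_apply, Complex.re_sum]
  exact Finset.sum_congr rfl fun k _ => by simp [Complex.mul_re, hP]

lemma map_im_mul_left (P X : Matrix (Fin 4) (Fin 4) ℂ) (hP : ∀ i j, (P i j).im = 0) :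
    (P * X).map Complex.im = P.map Complex.re * X.map Complex.im := by
  ext i j
  simp only [Matrix.map_apply, Matrix.mul_apply, Complex.im_sum]
  exact Finset.sum_congr rfl fun k _ => by simp [Complex.mul_im, hP]

lemma map_re_mul_right (X Q : Matrix (Fin 4) (Fin 4) ℂ) (hQ : ∀ i j, (Q i j).im = 0) :
    (X * Q).map Complex.re = X.map Complex.re * Q.map Complex.re := by
  ext i j
  simp only [Matrix.map_apply, Matrix.mul_apply, Complex.re_sum]
  exact Finset.sum_congr rfl fun k _ => by simp [Complex.mul_re, hQ]

lemma map_im_mul_right (X Q : Matrix (Fin 4) (Fin 4) ℂ) (hQ : ∀ i j, (Q i j).im = 0) :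
    (X * Q).map Complex.im = X.map Complex.im * Q.map Complex.re := by
  ext i j
  simp only [Matrix.map_apply, Matrix.mul_apply, Complex.im_sum]
  exact Finset.sum_congr rfl fun k _ => by simp [Complex.mul_im, hQ]

lemma real_det_one (P : Matrix (Fin 4) (Fin 4) ℂ) (hP : ∀ i j, (P i j).im = 0)
    (hdet : P.det = 1) : (P.map Complex.re).det = 1 := by
  have h1 : P = (P.map Complex.re).map (Complex.ofRealHom) := by
    ext i j
    apply Complex.ext <;> simp [Matrix.map_apply, hP i j]
  have h2 : (Complex.ofRealHom : ℝ →+* ℂ) ((P.map Complex.re).det) = 1 := by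
    rw [RingHom.map_det, RingHom.mapMatrix_apply, ← h1, hdet]
  rw [Complex.ofRealHom_eq_coe] at h2
  exact_mod_cast h2

theorem charPoly_local_invariant
    (U V : Matrix (Fin 4) (Fin 4) ℂ)
    (A₁ A₂ B₁ B₂ : Matrix (Fin 2) (Fin 2) ℂ)
    (hU : Uᴴ * U = 1) (hUdet : U.det = 1)
    (hV : Vᴴ * V = 1) (hVdet : V.det = 1)
    (hA₁ : A₁ᴴ * A₁ = 1) (hA₁det : A₁.det = 1)
    (hA₂ : A₂ᴴ * A₂ = 1) (hA₂det : A₂.det = 1)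
    (hB₁ : B₁ᴴ * B₁ = 1) (hB₁det : B₁.det = 1)
    (hB₂ : B₂ᴴ * B₂ = 1) (hB₂det : B₂.det = 1)
    (h : U = kron A₁ A₂ * V * kron B₁ B₂) :
    ∀ t : ℝ, charPoly U t = charPoly V t := by
  intro t
  obtain ⟨hA₁11, hA₁10⟩ := su2_form A₁ hA₁ hA₁det
  obtain ⟨hA₂11, hA₂10⟩ := su2_form A₂ hA₂ hA₂det
  obtain ⟨hB₁11, hB₁10⟩ := su2_form B₁ hB₁ hB₁det
  obtain ⟨hB₂11, hB₂10⟩ := su2_form B₂ hB₂ hB₂det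
  set P := magicMᴴ * (kron A₁ A₂ * magicM) with hPdef
  set Q := magicMᴴ * (kron B₁ B₂ * magicM) with hQdef
  set Y := magicMᴴ * V * magicM with hYdef
  have hPre : ∀ i j, (P i j).im = 0 := real_magic A₁ A₂ hA₁11 hA₁10 hA₂11 hA₂10
  have hQre : ∀ i j, (Q i j).im = 0 := real_magic B₁ B₂ hB₁11 hB₁10 hB₂11 hB₂10
  have hMdet : magicMᴴ.det * magicM.det = 1 := by
    rw [← Matrix.det_mul, magic_unitary, Matrix.det_one]
  have hPdet : P.det = 1 := by
    rw [hPdef, Matrix.det_mul, Matrix.det_mul, kron_det, hA₁det, hA₂det]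
    rw [show magicMᴴ.det * (1 ^ 2 * 1 ^ 2 * magicM.det) = magicMᴴ.det * magicM.det by ring,
      hMdet]
  have hQdet : Q.det = 1 := by
    rw [hQdef, Matrix.det_mul, Matrix.det_mul, kron_det, hB₁det, hB₂det]
    rw [show magicMᴴ.det * (1 ^ 2 * 1 ^ 2 * magicM.det) = magicMᴴ.det * magicM.det by ring,
      hMdet]
  have hW : magicMᴴ * U * magicM = P * Y * Q := by
    rw [h, hPdef, hQdef, hYdef]
    simp only [Matrix.mul_assoc, magic_cancel]
  have hre : (magicMᴴ * U * magicM).map Complex.re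
      = P.map Complex.re * (Y.map Complex.re * Q.map Complex.re) := by
    rw [hW, Matrix.mul_assoc, map_re_mul_left _ _ hPre, map_re_mul_right _ _ hQre]
  have him : (magicMᴴ * U * magicM).map Complex.im
      = P.map Complex.re * (Y.map Complex.im * Q.map Complex.re) := by
    rw [hW, Matrix.mul_assoc, map_im_mul_left _ _ hPre, map_im_mul_right _ _ hQre]
  unfold charPoly
  rw [hre, him]
  have key : P.map Complex.re * (Y.map Complex.re * Q.map Complex.re)
      + t • (P.map Complex.re * (Y.map Complex.im * Q.map Complex.re))
      = P.map Complex.re * ((Y.map Complex.re + t • Y.map Complex.im) * Q.map Complex.re) := by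
    rw [Matrix.add_mul, Matrix.mul_add, Matrix.smul_mul, Matrix.mul_smul]
  rw [key, Matrix.det_mul, Matrix.det_mul, real_det_one P hPre hPdet,
    real_det_one Q hQre hQdet, ← hYdef]
  ring
end

section
/- Let U₁, U₂ be two-qubit diagonal unitaries conjugated by local unitaries of CPHASE form, i.e., Uⱼ = diag(1, 1, 1, e^{iφⱼ}) up to local equivalence. Then for any A₁, A₂ ∈ SU(2), the gate V = U₁(A₁⊗A₂)U₂ has character polynomial coefficient B = 0, i.e., if η(V) = (x',y',z') with π/4 ≥ x' ≥ y' ≥ |z'|, then z' = 0. -/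
open Complex Matrix

def σX : Matrix (Fin 2) (Fin 2) ℂ := !![0, 1; 1, 0]
def σY : Matrix (Fin 2) (Fin 2) ℂ := !![0, -I; I, 0]
def σZ : Matrix (Fin 2) (Fin 2) ℂ := !![1, 0; 0, -1]

/-- The canonical gate L(x,y,z) = exp(i(x σX⊗σX + y σY⊗σY + z σZ⊗σZ)). -/
noncomputable def Lgate (x y z : ℝ) : Matrix (Fin 4) (Fin 4) ℂ :=
  NormedSpace.exp (I • ((x : ℂ) • kron σX σX + (y : ℂ) • kron σY σY + (z : ℂ) • kron σZ σZ))

/-- A 2×2 matrix is in SU(2). -/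
def SU2 (A : Matrix (Fin 2) (Fin 2) ℂ) : Prop := Aᴴ * A = 1 ∧ A.det = 1

/-- The CPHASE gate diag(1,1,1,e^{iφ}). -/
noncomputable def CPHASE (φ : ℝ) : Matrix (Fin 4) (Fin 4) ℂ :=
  Matrix.diagonal ![1, 1, 1, Complex.exp (I * φ)]


noncomputable section TwoCPAux

variable {A B C D : Matrix (Fin 2) (Fin 2) ℂ}

def Nmag : Matrix (Fin 4) (Fin 4) ℂ :=
  !![1, I, 0, 0; 0, 0, I, 1; 0, 0, I, -1; 1, -I, 0, 0]

def gm (V : Matrix (Fin 4) (Fin 4) ℂ) : Matrix (Fin 4) (Fin 4) ℂ :=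
  (1/2 : ℂ) • (Nmagᴴ * V * Nmag)

lemma NN : Nmagᴴ * Nmag = (2:ℂ) • 1 := by
  ext i j
  fin_cases i <;> fin_cases j <;>
    simp [Nmag, Matrix.mul_apply, Fin.sum_univ_four, Complex.ext_iff] <;> norm_num

lemma NN' : Nmag * Nmagᴴ = (2:ℂ) • 1 := by
  ext i j
  fin_cases i <;> fin_cases j <;>
    simp [Nmag, Matrix.mul_apply, Fin.sum_univ_four, Complex.ext_iff] <;> norm_num

lemma gm_mul (V W : Matrix (Fin 4) (Fin 4) ℂ) : gm (V * W) = gm V * gm W := by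
  simp only [gm, Matrix.smul_mul, Matrix.mul_smul, smul_smul]
  rw [show Nmagᴴ * V * Nmag * (Nmagᴴ * W * Nmag) =
      Nmagᴴ * V * (Nmag * Nmagᴴ) * (W * Nmag) by noncomm_ring, NN']
  rw [show Nmagᴴ * V * ((2:ℂ) • 1) * (W * Nmag) = (2:ℂ) • (Nmagᴴ * (V * W) * Nmag) by
    simp [Matrix.mul_smul, Matrix.smul_mul]; noncomm_ring]
  rw [smul_smul]
  norm_num

lemma gm_one : gm 1 = 1 := by
  simp only [gm, Matrix.mul_one, NN]
  rw [smul_smul]; norm_num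

lemma gm_conjTranspose (V : Matrix (Fin 4) (Fin 4) ℂ) : (gm V)ᴴ = gm Vᴴ := by
  simp only [gm, Matrix.conjTranspose_smul, Matrix.conjTranspose_mul,
    Matrix.conjTranspose_conjTranspose]
  rw [Matrix.mul_assoc]
  norm_num


lemma kron_mul : kron A B * kron C D = kron (A * C) (B * D) := by
  ext i j
  fin_cases i <;> fin_cases j <;>
    simp [kron, Matrix.mul_apply, Fin.sum_univ_four, Fin.sum_univ_two] <;> ring

lemma kron_conjTranspose : (kron A B)ᴴ = kron Aᴴ Bᴴ := by
  ext i j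
  fin_cases i <;> fin_cases j <;>
    simp [kron, Matrix.conjTranspose_apply]

lemma kron_one : kron 1 1 = (1 : Matrix (Fin 4) (Fin 4) ℂ) := by
  ext i j
  fin_cases i <;> fin_cases j <;> simp [kron, Matrix.vecHead, Matrix.vecTail]

lemma det_kron : (kron A B).det = A.det ^ 2 * B.det ^ 2 := by
  rw [Matrix.det_fin_two, Matrix.det_fin_two]
  simp +decide [Matrix.det_succ_row_zero, Fin.sum_univ_succ, kron, Fin.succAbove]
  ring

lemma SU2.shape (h : SU2 A) : A = !![A 0 0, A 0 1; -(starRingEnd ℂ) (A 0 1), (starRingEnd ℂ) (A 0 0)] := by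
  have hinv : Aᴴ = A⁻¹ := (Matrix.inv_eq_left_inv h.1).symm
  have hadj : A⁻¹ = A.adjugate := by
    rw [Matrix.inv_def, h.2]
    simp
  have h2 : Aᴴ = !![A 1 1, -(A 0 1); -(A 1 0), A 0 0] := by
    rw [hinv, hadj, Matrix.eta_fin_two A, Matrix.adjugate_fin_two]
  have e00 : (starRingEnd ℂ) (A 0 0) = A 1 1 := by
    have := congrFun (congrFun h2 0) 0
    simpa [Matrix.conjTranspose_apply] using this
  have e01 : (starRingEnd ℂ) (A 0 1) = -(A 1 0) := by
    have := congrFun (congrFun h2 1) 0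
    simpa [Matrix.conjTranspose_apply] using this
  have h11' : A 1 1 = (starRingEnd ℂ) (A 0 0) := e00.symm
  have h10' : A 1 0 = -(starRingEnd ℂ) (A 0 1) := by linear_combination e01
  ext i j
  fin_cases i <;> fin_cases j <;> simp [h11', h10']

lemma SU2.norm1 (h : SU2 A) :
    (starRingEnd ℂ) (A 0 0) * A 0 0 + (starRingEnd ℂ) (A 0 1) * A 0 1 = 1 := by
  have hd := h.2
  rw [Matrix.det_fin_two] at hd
  have h11 : A 1 1 = (starRingEnd ℂ) (A 0 0) := by
    have := h.shape
    exact (congrFun (congrFun this 1) 1).trans (by simp)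
  have h10 : A 1 0 = -(starRingEnd ℂ) (A 0 1) := by
    have := h.shape
    exact (congrFun (congrFun this 1) 0).trans (by simp)
  rw [h11, h10] at hd
  linear_combination hd


lemma gm_kron_real (a b c d : ℂ) (i j : Fin 4) :
    ((gm (kron !![a, b; -(starRingEnd ℂ) b, (starRingEnd ℂ) a]
        !![c, d; -(starRingEnd ℂ) d, (starRingEnd ℂ) c])) i j).im = 0 := by
  fin_cases i <;> fin_cases j <;>
    simp [gm, kron, Nmag, Matrix.mul_apply, Fin.sum_univ_four,
      Matrix.conjTranspose_apply, Matrix.smul_apply, smul_eq_mul] <;> ring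


def Ninv : Matrix (Fin 4) (Fin 4) ℂ := (1/2 : ℂ) • Nmagᴴ

lemma N_mul_Ninv : Nmag * Ninv = 1 := by
  rw [Ninv, Matrix.mul_smul, NN', smul_smul]; norm_num

lemma Ninv_mul_N : Ninv * Nmag = 1 := by
  rw [Ninv, Matrix.smul_mul, NN, smul_smul]; norm_num

def Nunit : (Matrix (Fin 4) (Fin 4) ℂ)ˣ := ⟨Nmag, Ninv, N_mul_Ninv, Ninv_mul_N⟩

/-- the CPHASE gate as an explicit matrix -/
lemma cphase_eq (φ : ℝ) : CPHASE φ =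
    !![1,0,0,0; 0,1,0,0; 0,0,1,0; 0,0,0,Complex.exp (I * φ)] := by
  ext i j
  fin_cases i <;> fin_cases j <;> simp [CPHASE, Matrix.diagonal, Matrix.vecHead, Matrix.vecTail]

lemma gm_cphase (φ : ℝ) : gm (CPHASE φ) =
    !![(1 + Complex.exp (I * φ))/2, I * (1 - Complex.exp (I * φ))/2, 0, 0;
       -I * (1 - Complex.exp (I * φ))/2, (1 + Complex.exp (I * φ))/2, 0, 0;
       0, 0, 1, 0; 0, 0, 0, 1] := by
  rw [cphase_eq]
  ext i j
  fin_cases i <;> fin_cases j <;>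
    simp [gm, Nmag, Matrix.mul_apply, Fin.sum_univ_four, Matrix.conjTranspose_apply,
      Matrix.smul_apply, smul_eq_mul, Matrix.vecHead, Matrix.vecTail] <;> ring_nf <;> simp [Complex.I_sq] <;> ring_nf

lemma K_left (φ : ℝ) : (gm (CPHASE φ))ᵀ * gm (CPHASE φ) =
    Matrix.diagonal ![Complex.exp (I * φ), Complex.exp (I * φ), 1, 1] := by
  rw [gm_cphase]
  ext i j
  fin_cases i <;> fin_cases j <;>
    simp [Matrix.mul_apply, Fin.sum_univ_four, Matrix.diagonal, Matrix.transpose_apply,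
      Matrix.vecHead, Matrix.vecTail] <;> ring_nf <;> simp [Complex.I_sq] <;> ring_nf

lemma K_right (φ : ℝ) : gm (CPHASE φ) * (gm (CPHASE φ))ᵀ =
    Matrix.diagonal ![Complex.exp (I * φ), Complex.exp (I * φ), 1, 1] := by
  rw [gm_cphase]
  ext i j
  fin_cases i <;> fin_cases j <;>
    simp [Matrix.mul_apply, Fin.sum_univ_four, Matrix.diagonal, Matrix.transpose_apply,
      Matrix.vecHead, Matrix.vecTail] <;> ring_nf <;> simp [Complex.I_sq] <;> ring_nf

lemma Hexp (x y z : ℝ) :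
    I • ((x : ℂ) • kron σX σX + (y : ℂ) • kron σY σY + (z : ℂ) • kron σZ σZ) =
    !![I*(z:ℂ), 0, 0, I*((x:ℂ)-y); 0, -(I*(z:ℂ)), I*((x:ℂ)+y), 0;
       0, I*((x:ℂ)+y), -(I*(z:ℂ)), 0; I*((x:ℂ)-y), 0, 0, I*(z:ℂ)] := by
  ext i j
  simp only [Matrix.smul_apply, Matrix.add_apply, smul_eq_mul]
  fin_cases i <;> fin_cases j <;>
    simp [kron, σX, σY, σZ, Matrix.vecHead, Matrix.vecTail] <;> ring

lemma Hmul (x y z : ℝ) :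
    (I • ((x : ℂ) • kron σX σX + (y : ℂ) • kron σY σY + (z : ℂ) • kron σZ σZ)) * Nmag =
    Nmag * Matrix.diagonal ![((x - y + z : ℝ) : ℂ) * I, ((-x + y + z : ℝ) : ℂ) * I,
      ((x + y - z : ℝ) : ℂ) * I, ((-x - y - z : ℝ) : ℂ) * I] := by
  rw [Hexp]
  ext i j
  fin_cases i <;> fin_cases j <;>
    simp [Nmag, Matrix.diagonal, Matrix.mul_apply, Fin.sum_univ_four,
      Matrix.vecHead, Matrix.vecTail] <;> push_cast <;> ring

lemma Hdecomp (x y z : ℝ) :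
    I • ((x : ℂ) • kron σX σX + (y : ℂ) • kron σY σY + (z : ℂ) • kron σZ σZ) =
    Nmag * Matrix.diagonal ![((x - y + z : ℝ) : ℂ) * I, ((-x + y + z : ℝ) : ℂ) * I,
      ((x + y - z : ℝ) : ℂ) * I, ((-x - y - z : ℝ) : ℂ) * I] * Ninv := by
  rw [← Hmul, Matrix.mul_assoc, N_mul_Ninv, Matrix.mul_one]

lemma gm_Lgate (x y z : ℝ) : gm (Lgate x y z) =
    Matrix.diagonal ![Complex.exp (((x - y + z : ℝ) : ℂ) * I),
      Complex.exp (((-x + y + z : ℝ) : ℂ) * I),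
      Complex.exp (((x + y - z : ℝ) : ℂ) * I),
      Complex.exp (((-x - y - z : ℝ) : ℂ) * I)] := by
  have h1 : Lgate x y z = Nmag * Matrix.diagonal ![Complex.exp (((x - y + z : ℝ) : ℂ) * I),
      Complex.exp (((-x + y + z : ℝ) : ℂ) * I), Complex.exp (((x + y - z : ℝ) : ℂ) * I),
      Complex.exp (((-x - y - z : ℝ) : ℂ) * I)] * Ninv := by
    rw [Lgate, Hdecomp]
    have : (Nmag : Matrix (Fin 4) (Fin 4) ℂ) = (Nunit : Matrix (Fin 4) (Fin 4) ℂ) := rfl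
    rw [this]
    have hi : (Ninv : Matrix (Fin 4) (Fin 4) ℂ) = ((Nunit⁻¹ : (Matrix (Fin 4) (Fin 4) ℂ)ˣ) :
        Matrix (Fin 4) (Fin 4) ℂ) := rfl
    rw [hi, Matrix.exp_units_conj Nunit, Matrix.exp_diagonal, Pi.exp_def]
    have hv : (fun i => NormedSpace.exp
        (![((x - y + z : ℝ) : ℂ) * I, ((-x + y + z : ℝ) : ℂ) * I,
          ((x + y - z : ℝ) : ℂ) * I, ((-x - y - z : ℝ) : ℂ) * I] i)) =
        ![Complex.exp (((x - y + z : ℝ) : ℂ) * I), Complex.exp (((-x + y + z : ℝ) : ℂ) * I),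
          Complex.exp (((x + y - z : ℝ) : ℂ) * I), Complex.exp (((-x - y - z : ℝ) : ℂ) * I)] := by
      funext k
      fin_cases k <;> simp [← Complex.exp_eq_exp_ℂ]
    rw [hv]
  rw [h1, gm]
  rw [show Nmagᴴ * (Nmag * Matrix.diagonal _ * Ninv) * Nmag =
      (Nmagᴴ * Nmag) * Matrix.diagonal ![Complex.exp (((x - y + z : ℝ) : ℂ) * I),
      Complex.exp (((-x + y + z : ℝ) : ℂ) * I), Complex.exp (((x + y - z : ℝ) : ℂ) * I),
      Complex.exp (((-x - y - z : ℝ) : ℂ) * I)] * (Ninv * Nmag) from by noncomm_ring]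
  rw [NN, Ninv_mul_N, Matrix.mul_one, Matrix.smul_mul, smul_smul, Matrix.one_mul]
  norm_num


lemma trace_orth_conj (O X : Matrix (Fin 4) (Fin 4) ℂ) (h : O * Oᵀ = 1) :
    Matrix.trace (Oᵀ * X * O) = Matrix.trace X := by
  rw [Matrix.trace_mul_comm, ← Matrix.mul_assoc, h, Matrix.one_mul]

lemma trace_expand (O : Matrix (Fin 4) (Fin 4) ℂ) (κ₁ κ₂ : Fin 4 → ℂ) :
    Matrix.trace (Oᵀ * Matrix.diagonal κ₁ * O * Matrix.diagonal κ₂) =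
    ∑ k : Fin 4, ∑ l : Fin 4, (O l k * O l k) * (κ₁ l * κ₂ k) := by
  simp only [Matrix.trace, Matrix.diag, Matrix.mul_diagonal, Matrix.mul_apply,
    Matrix.diagonal_apply, Matrix.transpose_apply, Finset.sum_mul, Finset.mul_sum]
  rw [Finset.sum_comm]
  apply Finset.sum_congr rfl
  intro k _
  rw [Finset.sum_comm]
  apply Finset.sum_congr rfl
  intro l _
  simp [Finset.mul_sum, Finset.sum_mul, Finset.sum_ite_eq, ite_mul, mul_ite]
  ring

lemma sin_sum_id (a b c : ℝ) :
    Real.sin (2*(a-b+c)) + Real.sin (2*(-a+b+c)) + Real.sin (2*(a+b-c)) +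
      Real.sin (2*(-a-b-c)) = 4 * Real.sin (2*a) * Real.sin (2*b) * Real.sin (2*c) := by
  have e1 : 2*(a-b+c) = (2*a - 2*b) + 2*c := by ring
  have e2 : 2*(-a+b+c) = -((2*a - 2*b) - 2*c) := by ring
  have e3 : 2*(a+b-c) = (2*a + 2*b) - 2*c := by ring
  have e4 : 2*(-a-b-c) = -((2*a + 2*b) + 2*c) := by ring
  rw [e1, e2, e3, e4]
  simp only [Real.sin_neg, Real.sin_add, Real.sin_sub, Real.cos_add, Real.cos_sub]
  ring


/-- real orthogonal (as a complex matrix) -/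
def RealOrth (X : Matrix (Fin 4) (Fin 4) ℂ) : Prop :=
  (∀ i j, (X i j).im = 0) ∧ Xᵀ * X = 1

lemma RealOrth.right {X : Matrix (Fin 4) (Fin 4) ℂ} (h : RealOrth X) : X * Xᵀ = 1 :=
  mul_eq_one_comm.mp h.2

lemma RealOrth.mul {X Y : Matrix (Fin 4) (Fin 4) ℂ} (hX : RealOrth X) (hY : RealOrth Y) :
    RealOrth (X * Y) := by
  constructor
  · intro i j
    rw [Matrix.mul_apply]
    rw [Complex.im_sum]
    apply Finset.sum_eq_zero
    intro k _
    rw [Complex.mul_im, hX.1 i k, hY.1 k j]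
    ring
  · rw [Matrix.transpose_mul, Matrix.mul_assoc, ← Matrix.mul_assoc Xᵀ X, hX.2,
      Matrix.one_mul, hY.2]

lemma conjTranspose_eq_transpose_of_real {X : Matrix (Fin 4) (Fin 4) ℂ}
    (h : ∀ i j, (X i j).im = 0) : Xᴴ = Xᵀ := by
  ext i j
  rw [Matrix.conjTranspose_apply, Matrix.transpose_apply]
  rw [show star (X j i) = (starRingEnd ℂ) (X j i) from rfl, Complex.conj_eq_iff_im]
  exact h j i

lemma realOrth_gm_kron {A B : Matrix (Fin 2) (Fin 2) ℂ} (hA : SU2 A) (hB : SU2 B) :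
    RealOrth (gm (kron A B)) := by
  have hre : ∀ i j, ((gm (kron A B)) i j).im = 0 := by
    intro i j
    conv_lhs => rw [hA.shape, hB.shape]
    exact gm_kron_real _ _ _ _ i j
  refine ⟨hre, ?_⟩
  rw [← conjTranspose_eq_transpose_of_real hre, gm_conjTranspose, ← gm_mul,
    kron_conjTranspose, kron_mul, hA.1, hB.1, kron_one, gm_one]

lemma det_Nmag : Nmag.det = -4 := by
  simp +decide [Matrix.det_succ_row_zero, Fin.sum_univ_succ, Nmag, Fin.succAbove]
  norm_num [Complex.ext_iff]

lemma det_gm (V : Matrix (Fin 4) (Fin 4) ℂ) : (gm V).det = V.det := by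
  rw [gm, Matrix.det_smul, Matrix.det_mul, Matrix.det_mul, Matrix.det_conjTranspose, det_Nmag]
  simp
  ring


lemma trace_sandwich (O₁ O₂ D : Matrix (Fin 4) (Fin 4) ℂ) (h1 : O₁ᵀ * O₁ = 1) (h2 : O₂ * O₂ᵀ = 1) :
    Matrix.trace ((O₁ * D * O₂)ᵀ * (O₁ * D * O₂)) = Matrix.trace (Dᵀ * D) := by
  simp only [Matrix.transpose_mul, Matrix.mul_assoc]
  rw [← Matrix.mul_assoc O₁ᵀ O₁, h1, Matrix.one_mul]
  rw [Matrix.trace_mul_comm]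
  simp only [Matrix.mul_assoc]
  rw [h2, Matrix.mul_one, Matrix.trace_mul_comm]

lemma trace_five (O₃ C₁ O C₂ O₅ : Matrix (Fin 4) (Fin 4) ℂ) (h3 : O₃ᵀ * O₃ = 1) (h5 : O₅ * O₅ᵀ = 1) :
    Matrix.trace ((O₃ * C₁ * O * C₂ * O₅)ᵀ * (O₃ * C₁ * O * C₂ * O₅)) =
    Matrix.trace (Oᵀ * (C₁ᵀ * C₁) * O * (C₂ * C₂ᵀ)) := by
  simp only [Matrix.transpose_mul, Matrix.mul_assoc]
  rw [← Matrix.mul_assoc O₃ᵀ O₃, h3, Matrix.one_mul]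
  rw [Matrix.trace_mul_comm]
  simp only [Matrix.mul_assoc]
  rw [h5, Matrix.mul_one]
  rw [Matrix.trace_mul_comm]
  simp only [Matrix.mul_assoc]


end TwoCPAux

/-- If U₁ and U₂ are CPHASE gates up to local equivalence, then for any single-qubit
gates A₁, A₂, the gate V = U₁ (A₁⊗A₂) U₂ has Weyl chamber coordinate z' = 0. -/
theorem two_cphase_gates_span_plane
    (U₁ U₂ : Matrix (Fin 4) (Fin 4) ℂ) (φ₁ φ₂ : ℝ)
    (P₁ P₂ Q₁ Q₂ R₁ R₂ S₁ S₂ : Matrix (Fin 2) (Fin 2) ℂ)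
    (hP₁ : SU2 P₁) (hP₂ : SU2 P₂) (hQ₁ : SU2 Q₁) (hQ₂ : SU2 Q₂)
    (hR₁ : SU2 R₁) (hR₂ : SU2 R₂) (hS₁ : SU2 S₁) (hS₂ : SU2 S₂)
    (hU₁ : U₁ = kron P₁ P₂ * CPHASE φ₁ * kron Q₁ Q₂)
    (hU₂ : U₂ = kron R₁ R₂ * CPHASE φ₂ * kron S₁ S₂)
    (A₁ A₂ : Matrix (Fin 2) (Fin 2) ℂ) (hA₁ : SU2 A₁) (hA₂ : SU2 A₂)
    (V : Matrix (Fin 4) (Fin 4) ℂ) (hV : V = U₁ * kron A₁ A₂ * U₂)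
    (x' y' z' : ℝ)
    (hx : x' ≤ Real.pi / 4) (hxy : y' ≤ x') (hyz : |z'| ≤ y')
    (hloc : ∃ E₁ E₂ F₁ F₂ : Matrix (Fin 2) (Fin 2) ℂ,
      SU2 E₁ ∧ SU2 E₂ ∧ SU2 F₁ ∧ SU2 F₂ ∧
      V = kron E₁ E₂ * Lgate x' y' z' * kron F₁ F₂) :
    z' = 0 := by
  obtain ⟨E₁, E₂, F₁, F₂, hE1, hE2, hF1, hF2, hVeq⟩ := hloc
  -- real orthogonal pieces
  have hO1 := realOrth_gm_kron hE1 hE2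
  have hO2 := realOrth_gm_kron hF1 hF2
  have hO3 := realOrth_gm_kron hP₁ hP₂
  have hOQ := realOrth_gm_kron hQ₁ hQ₂
  have hOA := realOrth_gm_kron hA₁ hA₂
  have hOR := realOrth_gm_kron hR₁ hR₂
  have hO5 := realOrth_gm_kron hS₁ hS₂
  set O : Matrix (Fin 4) (Fin 4) ℂ := gm (kron Q₁ Q₂) * gm (kron A₁ A₂) * gm (kron R₁ R₂)
    with hOdef
  have hO4 : RealOrth O := (hOQ.mul hOA).mul hOR
  set e₁ : ℂ := Complex.exp (I * φ₁) with he₁def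
  set e₂ : ℂ := Complex.exp (I * φ₂) with he₂def
  set dv : Fin 4 → ℂ := ![Complex.exp (((x' - y' + z' : ℝ) : ℂ) * I),
      Complex.exp (((-x' + y' + z' : ℝ) : ℂ) * I),
      Complex.exp (((x' + y' - z' : ℝ) : ℂ) * I),
      Complex.exp (((-x' - y' - z' : ℝ) : ℂ) * I)] with hdv
  -- two factorizations of gm V
  have hg1 : gm V = gm (kron E₁ E₂) * Matrix.diagonal dv * gm (kron F₁ F₂) := by
    rw [hVeq, gm_mul, gm_mul, gm_Lgate, hdv]
  have hg2 : gm V = gm (kron P₁ P₂) * gm (CPHASE φ₁) * O * gm (CPHASE φ₂) * gm (kron S₁ S₂) := by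
    rw [hV, hU₁, hU₂, hOdef]
    simp only [gm_mul]
    noncomm_ring
  -- the trace equation
  have trace1 : Matrix.trace ((gm V)ᵀ * gm V) = ∑ k : Fin 4, dv k * dv k := by
    rw [hg1, trace_sandwich _ _ _ hO1.2 hO2.right, Matrix.diagonal_transpose,
      Matrix.diagonal_mul_diagonal, Matrix.trace_diagonal]
  have trace2 : Matrix.trace ((gm V)ᵀ * gm V) =
      ∑ k : Fin 4, ∑ l : Fin 4, (O l k * O l k) *
        ((![e₁, e₁, 1, 1] : Fin 4 → ℂ) l * (![e₂, e₂, 1, 1] : Fin 4 → ℂ) k) := by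
    rw [hg2, trace_five _ _ _ _ _ hO3.2 hO5.right, K_left, K_right, trace_expand]
  have E0 : (∑ k : Fin 4, dv k * dv k) =
      ∑ k : Fin 4, ∑ l : Fin 4, (O l k * O l k) *
        ((![e₁, e₁, 1, 1] : Fin 4 → ℂ) l * (![e₂, e₂, 1, 1] : Fin 4 → ℂ) k) :=
    trace1.symm.trans trace2
  -- determinant equation
  have hdet1 : (gm V).det = 1 := by
    rw [hg1, Matrix.det_mul, Matrix.det_mul, det_gm, det_gm, det_kron, det_kron,
      hE1.2, hE2.2, hF1.2, hF2.2, Matrix.det_diagonal, Fin.prod_univ_four, hdv]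
    simp only [Matrix.cons_val_zero, Matrix.cons_val_one, Matrix.head_cons,
      Matrix.cons_val_two, Matrix.tail_cons, Matrix.cons_val_three]
    rw [← Complex.exp_add, ← Complex.exp_add, ← Complex.exp_add]
    rw [show (((x' - y' + z' : ℝ) : ℂ) * I + ((-x' + y' + z' : ℝ) : ℂ) * I +
      ((x' + y' - z' : ℝ) : ℂ) * I + ((-x' - y' - z' : ℝ) : ℂ) * I) = 0 by push_cast; ring]
    simp [Complex.exp_zero]
  have hdet2 : (gm V).det = e₁ * e₂ := by
    have hdc : ∀ φ : ℝ, (CPHASE φ).det = Complex.exp (I * φ) := by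
      intro φ
      rw [CPHASE, Matrix.det_diagonal, Fin.prod_univ_four]
      simp
    rw [hg2, hOdef]
    simp only [Matrix.det_mul, det_gm, det_kron, hdc,
      hP₁.2, hP₂.2, hQ₁.2, hQ₂.2, hA₁.2, hA₂.2, hR₁.2, hR₂.2, hS₁.2, hS₂.2]
    rw [← he₁def, ← he₂def]
    ring
  have he : e₁ * e₂ = 1 := hdet2.symm.trans hdet1
  -- e₂ is the conjugate of e₁
  have habs : e₁ * (starRingEnd ℂ) e₁ = 1 := by
    rw [Complex.mul_conj]
    norm_cast
    rw [he₁def, mul_comm I ((φ₁ : ℂ)), Complex.normSq_eq_norm_sq, Complex.norm_exp_ofReal_mul_I]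
    norm_num
  have hee : e₂ = (starRingEnd ℂ) e₁ :=
    mul_left_cancel₀ (by rw [he₁def]; exact Complex.exp_ne_zero _) (he.trans habs.symm)
  -- real entries of O
  have hβ : ∀ l k, O l k = ((O l k).re : ℂ) := by
    intro l k
    have h := hO4.1 l k
    apply Complex.ext <;> simp [h]
  have hcol : ∀ k : Fin 4, ∑ l : Fin 4, (O l k).re * (O l k).re = 1 := by
    intro k
    have h := congr_fun (congr_fun hO4.2 k) k
    rw [Matrix.mul_apply] at h
    simp only [Matrix.transpose_apply, Matrix.one_apply_eq] at h
    have : ((∑ l : Fin 4, (O l k).re * (O l k).re : ℝ) : ℂ) = 1 := by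
      push_cast
      rw [← h]
      apply Finset.sum_congr rfl
      intro l _
      rw [hβ l k]
      norm_num
    exact_mod_cast this
  have hrow : ∀ l : Fin 4, ∑ k : Fin 4, (O l k).re * (O l k).re = 1 := by
    intro l
    have h := congr_fun (congr_fun hO4.right l) l
    rw [Matrix.mul_apply] at h
    simp only [Matrix.transpose_apply, Matrix.one_apply_eq] at h
    have : ((∑ k : Fin 4, (O l k).re * (O l k).re : ℝ) : ℂ) = 1 := by
      push_cast
      rw [← h]
      apply Finset.sum_congr rfl
      intro k _
      rw [hβ l k]
      norm_num
    exact_mod_cast this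
  -- expand the trace equation and take imaginary parts
  have hdd : ∀ t : ℝ, Complex.exp ((t : ℂ) * I) * Complex.exp ((t : ℂ) * I) =
      Complex.exp (((2*t : ℝ) : ℂ) * I) := by
    intro t
    rw [← Complex.exp_add]
    congr 1
    push_cast
    ring
  have him : ∀ t : ℝ, (Complex.exp ((t : ℂ) * I)).im = Real.sin t := by
    intro t
    simp [Complex.exp_im]
  have hs1 : e₁.im = Real.sin φ₁ := by
    rw [he₁def, mul_comm I ((φ₁ : ℂ))]
    exact him φ₁
  rw [Fin.sum_univ_four] at E0
  simp only [Fin.sum_univ_four, hdv, Matrix.cons_val_zero, Matrix.cons_val_one,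
    Matrix.head_cons, Matrix.cons_val_two, Matrix.tail_cons, Matrix.cons_val_three,
    hdd] at E0
  -- substitute real entries and conjugates
  rw [hee] at E0
  have E1 := congrArg Complex.im E0
  simp only [Complex.add_im, him, Complex.mul_im, Complex.mul_re] at E1
  rw [hβ 0 0, hβ 0 1, hβ 0 2, hβ 0 3, hβ 1 0, hβ 1 1, hβ 1 2, hβ 1 3,
    hβ 2 0, hβ 2 1, hβ 2 2, hβ 2 3, hβ 3 0, hβ 3 1, hβ 3 2, hβ 3 3] at E1
  simp only [Complex.ofReal_re, Complex.ofReal_im, Complex.conj_re, Complex.conj_im,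
    Complex.one_re, Complex.one_im, mul_zero, zero_mul, add_zero, zero_add, mul_one,
    one_mul, neg_zero, sub_zero, zero_sub, mul_neg, neg_mul, neg_neg] at E1
  -- use conjugation relation on e₁ * conj e₁ = 1?  (terms with e₁ * conj e₁ are real)
  have hre : e₁.re * e₁.im - e₁.im * e₁.re = 0 := by ring
  -- final: sum of sines is zero
  have hc0 := hcol 0; have hc1 := hcol 1
  have hr0 := hrow 0; have hr1 := hrow 1
  rw [Fin.sum_univ_four] at hc0 hc1 hr0 hr1
  have hfin : Real.sin (2*(x' - y' + z')) + Real.sin (2*(-x' + y' + z')) +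
      Real.sin (2*(x' + y' - z')) + Real.sin (2*(-x' - y' - z')) = 0 := by
    linear_combination E1 + e₁.im * (hr0 + hr1 - hc0 - hc1)
  rw [sin_sum_id] at hfin
  -- chamber argument
  have hy0 : 0 ≤ y' := le_trans (abs_nonneg z') hyz
  have hx0 : 0 ≤ x' := le_trans hy0 hxy
  have hπ : Real.pi / 2 < Real.pi := by
    have := Real.pi_pos
    linarith
  have hz4 : |z'| ≤ Real.pi / 4 := le_trans hyz (le_trans hxy hx)
  rcases mul_eq_zero.mp (by linarith : Real.sin (2*x') * Real.sin (2*y') * Real.sin (2*z') = 0)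
    with h | hz
  · rcases mul_eq_zero.mp h with hxs | hys
    · have : 2*x' = 0 := by
        rw [← Real.sin_eq_zero_iff_of_lt_of_lt (by linarith [Real.pi_pos]) (by linarith)]
        exact hxs
      have hx'0 : x' = 0 := by linarith
      have : z' = 0 := by
        have : |z'| ≤ 0 := by linarith
        simpa [abs_nonpos_iff] using this
      exact this
    · have : 2*y' = 0 := by
        rw [← Real.sin_eq_zero_iff_of_lt_of_lt (by linarith [Real.pi_pos]) (by linarith)]
        exact hys
      have : |z'| ≤ 0 := by linarith
      simpa [abs_nonpos_iff] using this
  · have habs2 : -(Real.pi) < 2*z' ∧ 2*z' < Real.pi := by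
      rw [abs_le] at hz4
      constructor <;> linarith
    have : 2*z' = 0 := by
      rw [← Real.sin_eq_zero_iff_of_lt_of_lt habs2.1 habs2.2]
      exact hz
    linarith
end

section
/- In a multigraph with edge weights in which an edge e = {C,D} is called 'useful with respect to vertices A, B' if from both endpoints of e there exist strictly-increasing-weight paths starting with e and ending at A or B, and the graph is called 'good' if every pair of vertices A, B is connected by a path of edges useful with respect to A, B: in a good simple graph (no parallel edges) with at least 3 vertices, there is at most one vertex of degree 1. -/
variable {V : Type}

/-- The list of weights of consecutive edges along a list of vertices. -/
def wlist (w : V → V → ℝ) : List V → List ℝ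
  | a :: b :: l => w a b :: wlist w (b :: l)
  | _ => []

/-- A walk along a list of vertices with strictly increasing edge weights. -/
def IncPath (G : SimpleGraph V) (w : V → V → ℝ) (l : List V) : Prop :=
  List.Chain' G.Adj l ∧ List.Chain' (· < ·) (wlist w l)

/-- The edge C–D is useful with respect to the vertices A and B: in both directions there
is a strictly-increasing-weight path starting with the edge and ending at A or B. -/
def Useful (G : SimpleGraph V) (w : V → V → ℝ) (A B C D : V) : Prop :=
  (∃ l : List V, IncPath G w (C :: D :: l) ∧
      (C :: D :: l).getLast (by simp) ∈ ({A, B} : Set V)) ∧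
  (∃ l : List V, IncPath G w (D :: C :: l) ∧
      (D :: C :: l).getLast (by simp) ∈ ({A, B} : Set V))

/-- A graph is good if every pair of distinct vertices is joined by a path consisting
entirely of edges useful with respect to that pair. -/
def GoodGraph (G : SimpleGraph V) (w : V → V → ℝ) : Prop :=
  ∀ A B : V, A ≠ B → ∃ l : List V,
    List.Chain' G.Adj (A :: l) ∧ (A :: l).getLast (by simp) = B ∧
    ∀ p ∈ (A :: l).zip l, Useful G w A B p.1 p.2

/-- In a strictly increasing chain, the head is less than any element of the tail
described by `getLast?`. -/
lemma aux_head_lt_last {L : List ℝ} {h v : ℝ} (hc : List.Chain' (· < ·) (h :: L))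
    (hv : L.getLast? = some v) : h < v := by
  have hp := List.isChain_iff_pairwise.mp hc
  have hmem : v ∈ L := by
    obtain ⟨h', rfl⟩ := List.mem_getLast?_eq_getLast (l := L) hv
    exact List.getLast_mem h'
  exact (List.pairwise_cons.mp hp).1 v hmem

/-- The last edge of a walk: its weight is the last entry of `wlist` and it joins some
vertex `u` to the final vertex. -/
lemma aux_wlast (G : SimpleGraph V) (w : V → V → ℝ) :
    ∀ (l : List V) (a b : V), List.Chain' G.Adj (a :: b :: l) →
      ∃ u, G.Adj u ((a :: b :: l).getLast (by simp)) ∧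
        (wlist w (a :: b :: l)).getLast? = some (w u ((a :: b :: l).getLast (by simp))) := by
  intro l
  induction l with
  | nil =>
    intro a b h
    exact ⟨a, (List.isChain_cons_cons.mp h).1, by simp [wlist]⟩
  | cons c l ih =>
    intro a b h
    obtain ⟨u, hu, hw⟩ := ih b c h.tail
    refine ⟨u, ?_, ?_⟩
    · simpa [List.getLast_cons_cons] using hu
    · simp only [wlist, List.getLast?_cons_cons] at hw ⊢
      simpa [List.getLast_cons_cons] using hw

/-- If an increasing walk of length at least two ends at a vertex `x` whose unique
neighbour is `x'`, then the first edge weight is smaller than `w x' x`. -/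
lemma aux_inc_end {G : SimpleGraph V} {w : V → V → ℝ}
    {x x' : V} (hx : ∀ v, G.Adj x v ↔ v = x')
    {a b : V} {l : List V} (hp : IncPath G w (a :: b :: l))
    (hlast : (a :: b :: l).getLast (by simp) = x) (hne : l ≠ []) :
    w a b < w x' x := by
  obtain ⟨c, l', rfl⟩ := List.exists_cons_of_ne_nil hne
  obtain ⟨u, hu, hw⟩ := aux_wlast G w _ a b hp.1
  rw [hlast] at hu hw
  have hu' : u = x' := (hx u).mp (G.adj_symm hu)
  rw [hu'] at hw
  have hc : List.Chain' (· < ·) (w a b :: wlist w (b :: c :: l')) := by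
    simpa [wlist] using hp.2
  have hv : (wlist w (b :: c :: l')).getLast? = some (w x' x) := by
    simpa [wlist, List.getLast?_cons_cons] using hw
  exact aux_head_lt_last hc hv

/-- An increasing walk starting at a vertex `x` whose unique neighbour is `x'`
cannot return to `x`. -/
lemma aux_inc_not_end {G : SimpleGraph V} {w : V → V → ℝ}
    (hsymm : ∀ a b, w a b = w b a)
    {x x' : V} (hx : ∀ v, G.Adj x v ↔ v = x')
    {b : V} {l : List V} (hp : IncPath G w (x :: b :: l)) :
    (x :: b :: l).getLast (by simp) ≠ x := by
  have hadj : G.Adj x b := (List.isChain_cons_cons.mp hp.1).1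
  have hb : b = x' := (hx b).mp hadj
  rcases eq_or_ne l [] with rfl | hne
  · simpa using (G.ne_of_adj hadj).symm
  · intro hlast
    have h := aux_inc_end hx hp hlast hne
    rw [hb, hsymm x' x] at h
    exact lt_irrefl _ h

/-- In a two-vertex component, walks stay in the component. -/
lemma aux_stay {G : SimpleGraph V} {x y : V}
    (hx : ∀ v, G.Adj x v → v = y) (hy : ∀ v, G.Adj y v → v = x) :
    ∀ (l : List V) (a : V), (a = x ∨ a = y) → List.Chain' G.Adj (a :: l) →
      ((a :: l).getLast (by simp) = x ∨ (a :: l).getLast (by simp) = y) := by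
  intro l
  induction l with
  | nil => intro a ha _; simpa using ha
  | cons b l ih =>
    intro a ha hc
    have hab : G.Adj a b := (List.isChain_cons_cons.mp hc).1
    have hb : b = x ∨ b = y := by
      rcases ha with rfl | rfl
      · exact Or.inr (hx b hab)
      · exact Or.inl (hy b hab)
    have := ih b hb hc.tail
    simpa [List.getLast_cons_cons] using this

/-- The pair consisting of the two last vertices of a walk occurs among the
consecutive pairs. -/
lemma aux_zip_last :
    ∀ (l : List V) (a t : V), l ≠ [] → (a :: l).getLast? = some t →
      ∃ u, (u, t) ∈ (a :: l).zip l := by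
  intro l
  induction l with
  | nil => intro a t h _; exact absurd rfl h
  | cons b l ih =>
    intro a t _ hlast
    rcases eq_or_ne l [] with rfl | hne
    · have hb : t = b := by simpa using hlast.symm
      subst hb
      exact ⟨a, by simp⟩
    · obtain ⟨u, hu⟩ := ih b t hne (by rwa [List.getLast?_cons_cons] at hlast)
      exact ⟨u, List.mem_cons_of_mem _ hu⟩

/-- In a good simple graph with at least 3 vertices and distinct edge weights, there is at
most one vertex of degree 1. -/
theorem good_graph_at_most_one_degree_one_vertex
    [Fintype V] (G : SimpleGraph V) [DecidableRel G.Adj] (w : V → V → ℝ)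
    (hsymm : ∀ a b, w a b = w b a)
    (hdist : ∀ a b c d, G.Adj a b → G.Adj c d → w a b = w c d →
      (a = c ∧ b = d) ∨ (a = d ∧ b = c))
    (hcard : 3 ≤ Fintype.card V)
    (hgood : GoodGraph G w) :
    ∀ x y : V, G.degree x = 1 → G.degree y = 1 → x = y := by
  intro x y hdx hdy
  by_contra hxy
  classical
  -- extract unique neighbours
  obtain ⟨x', hx'⟩ : ∃ x', ∀ v, G.Adj x v ↔ v = x' := by
    obtain ⟨x', hx'⟩ := Finset.card_eq_one.mp hdx
    exact ⟨x', fun v => by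
      rw [← SimpleGraph.mem_neighborFinset, hx', Finset.mem_singleton]⟩
  obtain ⟨y', hy'⟩ : ∃ y', ∀ v, G.Adj y v ↔ v = y' := by
    obtain ⟨y', hy'⟩ := Finset.card_eq_one.mp hdy
    exact ⟨y', fun v => by
      rw [← SimpleGraph.mem_neighborFinset, hy', Finset.mem_singleton]⟩
  by_cases hadj : G.Adj x y
  · -- x and y are joined by an edge; they form a component of size 2,
    -- contradicting connectivity to a third vertex
    have hxv : ∀ v, G.Adj x v → v = y := by
      intro v hv
      exact ((hx' v).mp hv).trans ((hx' y).mp hadj).symm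
    have hyv : ∀ v, G.Adj y v → v = x := by
      intro v hv
      exact ((hy' v).mp hv).trans ((hy' x).mp (G.adj_symm hadj)).symm
    obtain ⟨z, hzx, hzy⟩ : ∃ z, z ≠ x ∧ z ≠ y := by
      by_contra hz
      push_neg at hz
      have hsub : (Finset.univ : Finset V) ⊆ {x, y} := by
        intro v _
        rcases eq_or_ne v x with rfl | hv
        · simp
        · simp [hz v hv]
      have hle := Finset.card_le_card hsub
      rw [Finset.card_univ] at hle
      have h2 : ({x, y} : Finset V).card ≤ 2 :=
        le_trans (Finset.card_insert_le _ _) (by simp)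
      omega
    obtain ⟨l, hc, hl, -⟩ := hgood x z (Ne.symm hzx)
    have := aux_stay hxv hyv l x (Or.inl rfl) hc
    rw [hl] at this
    rcases this with h | h
    · exact hzx h
    · exact hzy h
  · -- main case: x and y are not adjacent
    obtain ⟨l, hc, hl, hu⟩ := hgood x y hxy
    obtain ⟨b, l₂, rfl⟩ : ∃ b l₂, l = b :: l₂ := by
      cases l with
      | nil => exact absurd (by simpa using hl) hxy
      | cons b l₂ => exact ⟨b, l₂, rfl⟩
    have hxb : G.Adj x b := (List.isChain_cons_cons.mp hc).1
    have hb : x' = b := ((hx' b).mp hxb).symm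
    subst hb
    -- usefulness of the first edge gives an increasing walk from x to y
    have huf : Useful G w x y x x' := hu (x, x') (by simp)
    obtain ⟨m, hm, hmlast⟩ := huf.1
    simp only [Set.mem_insert_iff, Set.mem_singleton_iff] at hmlast
    have hmne : m ≠ [] := by
      rintro rfl
      simp only [List.getLast_cons_cons, List.getLast_singleton] at hmlast
      rcases hmlast with h | h
      · exact G.ne_of_adj hxb h.symm
      · exact hadj (h ▸ hxb)
    have hmy : (x :: x' :: m).getLast (by simp) = y := by
      rcases hmlast with h | h
      · exact absurd h (aux_inc_not_end hsymm hx' hm)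
      · exact h
    have h1 : w x x' < w y' y := aux_inc_end hy' hm hmy hmne
    -- usefulness of the last edge gives an increasing walk from y to x
    have hly : (x :: x' :: l₂).getLast? = some y := by
      rw [List.getLast?_eq_getLast_of_ne_nil (by simp : (x :: x' :: l₂) ≠ [])]
      exact congrArg some hl
    obtain ⟨u, hu'⟩ := aux_zip_last (x' :: l₂) x y (by simp) hly
    have hub : Useful G w x y u y := hu (u, y) hu'
    obtain ⟨m', hm', hm'last⟩ := hub.2
    simp only [Set.mem_insert_iff, Set.mem_singleton_iff] at hm'last
    have hyu : G.Adj y u := (List.isChain_cons_cons.mp hm'.1).1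
    have hu0 : y' = u := ((hy' u).mp hyu).symm
    subst hu0
    have hm'ne : m' ≠ [] := by
      rintro rfl
      simp only [List.getLast_cons_cons, List.getLast_singleton] at hm'last
      rcases hm'last with h | h
      · exact hadj (h ▸ (G.adj_symm hyu))
      · exact G.ne_of_adj hyu h.symm
    have hm'x : (y :: y' :: m').getLast (by simp) = x := by
      rcases hm'last with h | h
      · exact h
      · exact absurd h (aux_inc_not_end hsymm hy' hm')
    have h2 : w y y' < w x' x := aux_inc_end hx' hm' hm'x hm'ne
    rw [hsymm y y'] at h2
    rw [hsymm x' x] at h2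
    exact absurd (h1.trans h2) (lt_irrefl _)
end

section
/- In a good simple graph (no parallel edges) whose vertices of degree 2 induce no cycle, every 'chain' (connected component of the subgraph induced by degree-2 vertices, forming a path) has at most 4 vertices. -/
variable {V : Type}

lemma incpath_cons {G : SimpleGraph V} {w : V → V → ℝ} {x y z : V} {l : List V}
    (h : IncPath G w (x::y::z::l)) :
    G.Adj x y ∧ w x y < w y z ∧ IncPath G w (y::z::l) := by
  obtain ⟨h1, h2⟩ := h
  rw [List.Chain', List.isChain_cons_cons] at h1
  have hw : wlist w (x::y::z::l) = w x y :: w y z :: wlist w (z::l) := rfl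
  rw [hw, List.Chain', List.isChain_cons_cons] at h2
  exact ⟨h1.1, h2.1, h1.2, h2.2⟩

lemma incpath_adj {G : SimpleGraph V} {w : V → V → ℝ} {x y : V} {l : List V}
    (h : IncPath G w (x::y::l)) : G.Adj x y := by
  have := h.1
  rw [List.Chain', List.isChain_cons_cons] at this
  exact this.1

lemma inc_rec {G : SimpleGraph V} {w : V → V → ℝ} (St : Set V) (Inv : V → ℝ → Prop)
    (base : ∀ x y, G.Adj x y → y ∈ St → Inv y (w x y))
    (step : ∀ x y z, G.Adj x y → G.Adj y z → w x y < w y z → Inv z (w y z) → Inv y (w x y)) :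
    ∀ (l : List V) (x y : V), IncPath G w (x::y::l) →
      (x::y::l).getLast (by simp) ∈ St → Inv y (w x y) := by
  intro l
  induction l with
  | nil =>
    intro x y h hl
    exact base x y (incpath_adj h) (by simpa using hl)
  | cons z l ih =>
    intro x y h hl
    obtain ⟨hxy, hlt, h'⟩ := incpath_cons h
    have hl' : (y::z::l).getLast (by simp) ∈ St := by
      rwa [List.getLast_cons (by simp)] at hl
    exact step x y z hxy (incpath_adj h') hlt (ih y z h' hl')

lemma two_nbrs [Fintype V] {G : SimpleGraph V} [DecidableRel G.Adj] {v x y : V}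
    (hdeg : G.degree v = 2) (hx : G.Adj v x) (hy : G.Adj v y) (hxy : x ≠ y) :
    ∀ z, G.Adj v z → z = x ∨ z = y := by
  classical
  intro z hz
  have hsub : ({x, y} : Finset V) ⊆ G.neighborFinset v := by
    intro t ht
    simp only [Finset.mem_insert, Finset.mem_singleton] at ht
    rcases ht with rfl | rfl <;> simpa [SimpleGraph.mem_neighborFinset]
  have hcard : ({x, y} : Finset V).card = 2 := Finset.card_pair hxy
  have hN : G.neighborFinset v = {x, y} := by
    apply (Finset.eq_of_subset_of_card_le hsub ?_).symm
    rw [hcard]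
    rw [← SimpleGraph.card_neighborFinset_eq_degree] at hdeg
    omega
  have : z ∈ G.neighborFinset v := by simpa [SimpleGraph.mem_neighborFinset]
  rw [hN] at this
  simpa using this

lemma other_nbr [Fintype V] {G : SimpleGraph V} [DecidableRel G.Adj] {v x : V}
    (hdeg : G.degree v = 2) (hx : G.Adj v x) :
    ∃ q, G.Adj v q ∧ q ≠ x := by
  classical
  have h2 : x ∈ G.neighborFinset v := by simpa [SimpleGraph.mem_neighborFinset]
  have h3 : ((G.neighborFinset v).erase x).Nonempty := by
    rw [← Finset.card_pos, Finset.card_erase_of_mem h2,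
      SimpleGraph.card_neighborFinset_eq_degree, hdeg]
    norm_num
  obtain ⟨q, hq⟩ := h3
  rw [Finset.mem_erase] at hq
  exact ⟨q, by simpa [SimpleGraph.mem_neighborFinset] using hq.2, hq.1⟩

lemma chain'_zip_adj {α : Type} {R : α → α → Prop} :
    ∀ {l : List α} {x : α}, List.Chain' R (x :: l) →
      ∀ p ∈ (x :: l).zip l, R p.1 p.2 := by
  intro l
  induction l with
  | nil => intro x _ p hp; simp at hp
  | cons h t ih =>
    intro x hc p hp
    rw [List.Chain', List.isChain_cons_cons] at hc
    rcases List.mem_cons.mp hp with rfl | hp'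
    · exact hc.1
    · exact ih hc.2 p hp'

lemma exists_last_pair {α : Type} :
    ∀ (l : List α) (A : α), l ≠ [] →
      ∃ u, (u, (A :: l).getLast (by simp)) ∈ (A :: l).zip l := by
  intro l
  induction l with
  | nil => intro A h; exact absurd rfl h
  | cons h t ih =>
    intro A _
    cases t with
    | nil => exact ⟨A, by simp⟩
    | cons h2 t2 =>
      obtain ⟨u, hu⟩ := ih h (by simp)
      refine ⟨u, ?_⟩
      rw [List.getLast_cons (by simp)]
      exact List.mem_cons_of_mem _ hu

lemma no_five_cycle {G : SimpleGraph V} [Fintype V] [DecidableRel G.Adj]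
    (S : Set V) (hacyc : (G.induce S).IsAcyclic)
    (v0 v1 v2 v3 v4 : V) (h0 : v0 ∈ S) (h1 : v1 ∈ S) (h2 : v2 ∈ S) (h3 : v3 ∈ S) (h4 : v4 ∈ S)
    (ne01 : v0 ≠ v1) (ne02 : v0 ≠ v2) (ne03 : v0 ≠ v3) (ne04 : v0 ≠ v4)
    (ne12 : v1 ≠ v2) (ne13 : v1 ≠ v3) (ne14 : v1 ≠ v4)
    (ne23 : v2 ≠ v3) (ne24 : v2 ≠ v4) (ne34 : v3 ≠ v4)
    (a01 : G.Adj v0 v1) (a12 : G.Adj v1 v2) (a23 : G.Adj v2 v3) (a34 : G.Adj v3 v4)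
    (a40 : G.Adj v4 v0) : False := by
  let u0 : S := ⟨v0, h0⟩
  let u1 : S := ⟨v1, h1⟩
  let u2 : S := ⟨v2, h2⟩
  let u3 : S := ⟨v3, h3⟩
  let u4 : S := ⟨v4, h4⟩
  have b01 : (G.induce S).Adj u0 u1 := a01
  have b12 : (G.induce S).Adj u1 u2 := a12
  have b23 : (G.induce S).Adj u2 u3 := a23
  have b34 : (G.induce S).Adj u3 u4 := a34
  have b40 : (G.induce S).Adj u4 u0 := a40
  let W : (G.induce S).Walk u0 u0 :=
    .cons b01 (.cons b12 (.cons b23 (.cons b34 (.cons b40 .nil))))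
  have : W.IsCycle := by
    rw [SimpleGraph.Walk.isCycle_def]
    refine ⟨?_, by simp [W], ?_⟩
    · rw [SimpleGraph.Walk.isTrail_def]
      simp only [W, SimpleGraph.Walk.edges_cons, SimpleGraph.Walk.edges_nil]
      simp [List.nodup_cons, Sym2.eq, Sym2.rel_iff', Subtype.ext_iff, u0, u1, u2, u3, u4,
        ne01, ne02, ne03, ne04, ne12, ne13, ne14, ne23, ne24, ne34,
        ne01.symm, ne02.symm, ne03.symm, ne04.symm, ne12.symm, ne13.symm, ne14.symm,
        ne23.symm, ne24.symm, ne34.symm]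
    · simp only [W, SimpleGraph.Walk.support_cons, SimpleGraph.Walk.support_nil]
      simp [List.nodup_cons, Subtype.ext_iff, u0, u1, u2, u3, u4, ne01, ne02, ne03, ne04, ne12, ne13, ne14,
        ne23, ne24, ne34, ne12.symm, ne13.symm, ne14.symm, ne23.symm, ne24.symm, ne34.symm,
        ne01.symm, ne02.symm, ne03.symm, ne04.symm]
  exact hacyc W this


lemma exists_last_pair' {α : Type} (l : List α) (A B : α) (h : l ≠ [])
    (hB : (A :: l).getLast (by simp) = B) : ∃ u, (u, B) ∈ (A :: l).zip l :=
  hB ▸ exists_last_pair l A h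

/-- In a good simple graph with distinct edge weights whose degree-2 vertices induce no
cycle, every chain of degree-2 vertices has at most 4 vertices: there is no path of 5
distinct degree-2 vertices. -/
theorem good_graph_chain_at_most_four
    [Fintype V] (G : SimpleGraph V) [DecidableRel G.Adj] (w : V → V → ℝ)
    (hsymm : ∀ a b, w a b = w b a)
    (hdist : ∀ a b c d, G.Adj a b → G.Adj c d → w a b = w c d →
      (a = c ∧ b = d) ∨ (a = d ∧ b = c))
    (hgood : GoodGraph G w)
    (hacyc : (G.induce {v | G.degree v = 2}).IsAcyclic) :
    ¬∃ p : Fin 5 → V, Function.Injective p ∧ (∀ i, G.degree (p i) = 2) ∧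
      ∀ i : Fin 4, G.Adj (p i.castSucc) (p i.succ) := by
  classical
  rintro ⟨p, hinj, hdegs, hadjs⟩
  have A01 : G.Adj (p 0) (p 1) := by
    have := hadjs 0
    rwa [show ((0:Fin 4).castSucc) = (0:Fin 5) from by decide,
      show ((0:Fin 4).succ) = (1:Fin 5) from by decide] at this
  have A12 : G.Adj (p 1) (p 2) := by
    have := hadjs 1
    rwa [show ((1:Fin 4).castSucc) = (1:Fin 5) from by decide,
      show ((1:Fin 4).succ) = (2:Fin 5) from by decide] at this
  have A23 : G.Adj (p 2) (p 3) := by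
    have := hadjs 2
    rwa [show ((2:Fin 4).castSucc) = (2:Fin 5) from by decide,
      show ((2:Fin 4).succ) = (3:Fin 5) from by decide] at this
  have A34 : G.Adj (p 3) (p 4) := by
    have := hadjs 3
    rwa [show ((3:Fin 4).castSucc) = (3:Fin 5) from by decide,
      show ((3:Fin 4).succ) = (4:Fin 5) from by decide] at this
  have ne01 : p 0 ≠ p 1 := fun hh => absurd (hinj hh) (by decide)
  have ne02 : p 0 ≠ p 2 := fun hh => absurd (hinj hh) (by decide)
  have ne03 : p 0 ≠ p 3 := fun hh => absurd (hinj hh) (by decide)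
  have ne04 : p 0 ≠ p 4 := fun hh => absurd (hinj hh) (by decide)
  have ne12 : p 1 ≠ p 2 := fun hh => absurd (hinj hh) (by decide)
  have ne13 : p 1 ≠ p 3 := fun hh => absurd (hinj hh) (by decide)
  have ne14 : p 1 ≠ p 4 := fun hh => absurd (hinj hh) (by decide)
  have ne23 : p 2 ≠ p 3 := fun hh => absurd (hinj hh) (by decide)
  have ne24 : p 2 ≠ p 4 := fun hh => absurd (hinj hh) (by decide)
  have ne34 : p 3 ≠ p 4 := fun hh => absurd (hinj hh) (by decide)
  have deg0 : G.degree (p 0) = 2 := hdegs 0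
  have deg1 : G.degree (p 1) = 2 := hdegs 1
  have deg2 : G.degree (p 2) = 2 := hdegs 2
  have deg3 : G.degree (p 3) = 2 := hdegs 3
  have deg4 : G.degree (p 4) = 2 := hdegs 4
  set P0 := p 0 with hP0
  set P1 := p 1 with hP1
  set P2 := p 2 with hP2
  set P3 := p 3 with hP3
  set P4 := p 4 with hP4
  -- the extra neighbours of the endpoints
  obtain ⟨q, A0q, hqP1⟩ := other_nbr deg0 A01
  obtain ⟨r, A4r, hrP3⟩ := other_nbr deg4 A34.symm
  -- neighbour classification
  have N0 : ∀ z, G.Adj P0 z → z = P1 ∨ z = q :=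
    two_nbrs deg0 A01 A0q (fun hh => hqP1 hh.symm)
  have N1 : ∀ z, G.Adj P1 z → z = P0 ∨ z = P2 :=
    two_nbrs deg1 A01.symm A12 ne02
  have N2 : ∀ z, G.Adj P2 z → z = P1 ∨ z = P3 :=
    two_nbrs deg2 A12.symm A23 ne13
  have N3 : ∀ z, G.Adj P3 z → z = P2 ∨ z = P4 :=
    two_nbrs deg3 A23.symm A34 ne24
  have N4 : ∀ z, G.Adj P4 z → z = P3 ∨ z = r :=
    two_nbrs deg4 A34.symm A4r (fun hh => hrP3 hh.symm)
  -- no edge between P0 and P4 (else a 5-cycle among degree-2 vertices)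
  have h04 : ¬ G.Adj P0 P4 := by
    intro hadj04
    exact no_five_cycle {v | G.degree v = 2} hacyc P0 P1 P2 P3 P4
      deg0 deg1 deg2 deg3 deg4 ne01 ne02 ne03 ne04 ne12 ne13 ne14 ne23 ne24 ne34
      A01 A12 A23 A34 hadj04.symm
  have hq0 : q ≠ P0 := fun hh => G.loopless.irrefl P0 (hh ▸ A0q)
  have hq2 : q ≠ P2 := by
    rintro rfl
    rcases N2 P0 A0q.symm with hh | hh
    · exact ne01 hh
    · exact ne03 hh
  have hq3 : q ≠ P3 := by
    rintro rfl
    rcases N3 P0 A0q.symm with hh | hh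
    · exact ne02 hh
    · exact ne04 hh
  have hq4 : q ≠ P4 := by
    rintro rfl
    exact h04 A0q
  have hr0 : r ≠ P0 := by
    rintro rfl
    exact h04 A4r.symm
  have hr1 : r ≠ P1 := by
    rintro rfl
    rcases N1 P4 A4r.symm with hh | hh
    · exact ne04 hh.symm
    · exact ne24 hh.symm
  have hr2 : r ≠ P2 := by
    rintro rfl
    rcases N2 P4 A4r.symm with hh | hh
    · exact ne14 hh.symm
    · exact ne34 hh.symm
  have hr4 : r ≠ P4 := fun hh => G.loopless.irrefl P4 (hh ▸ A4r)
  have hqc : q ∉ ({P0, P1, P2, P3, P4} : Set V) := by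
    simp [hq0, hqP1, hq2, hq3, hq4]
  have hrc : r ∉ ({P0, P1, P2, P3, P4} : Set V) := by
    simp [hr0, hr1, hr2, hrP3, hr4]
  -- weights
  obtain ⟨a, hwa⟩ : ∃ a, w P0 P1 = a := ⟨_, rfl⟩
  obtain ⟨b, hwb⟩ : ∃ b, w P1 P2 = b := ⟨_, rfl⟩
  obtain ⟨c, hwc⟩ : ∃ c, w P2 P3 = c := ⟨_, rfl⟩
  obtain ⟨d, hwd⟩ : ∃ d, w P3 P4 = d := ⟨_, rfl⟩
  obtain ⟨e, hwe⟩ : ∃ e, w q P0 = e := ⟨_, rfl⟩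
  obtain ⟨f, hwf⟩ : ∃ f, w P4 r = f := ⟨_, rfl⟩
  have s10 : w P1 P0 = a := (hsymm P1 P0).trans hwa
  have s21 : w P2 P1 = b := (hsymm P2 P1).trans hwb
  have s32 : w P3 P2 = c := (hsymm P3 P2).trans hwc
  have s43 : w P4 P3 = d := (hsymm P4 P3).trans hwd
  have s0q : w P0 q = e := (hsymm P0 q).trans hwe
  have sr4 : w r P4 = f := (hsymm r P4).trans hwf
  -- the chain as a set
  set C5 : Set V := {P0, P1, P2, P3, P4} with hC5
  -- ============ Invariant for target {P1, P3} ============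
  let Inv13 : V → ℝ → Prop := fun y m =>
    (y = P0 → (m < a ∨ (m < e ∧ e < f ∧ f < d))) ∧
    (y = P2 → (m < b ∨ m < c)) ∧
    (y = P4 → (m < d ∨ (m < f ∧ f < e ∧ e < a))) ∧
    (y ∉ C5 → ((m < e ∧ e < a) ∨ (m < f ∧ f < d)))
  have base13 : ∀ x y, G.Adj x y → y ∈ ({P1, P3} : Set V) → Inv13 y (w x y) := by
    intro x y _ hy
    simp only [Set.mem_insert_iff, Set.mem_singleton_iff] at hy
    rcases hy with rfl | rfl
    · refine ⟨fun hh => ?_, fun hh => ?_, fun hh => ?_, fun hh => ?_⟩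
      · exact absurd hh.symm ne01
      · exact absurd hh ne12
      · exact absurd hh ne14
      · exact absurd (by simp [hC5]) hh
    · refine ⟨fun hh => ?_, fun hh => ?_, fun hh => ?_, fun hh => ?_⟩
      · exact absurd hh.symm ne03
      · exact absurd hh.symm ne23
      · exact absurd hh ne34
      · exact absurd (by simp [hC5]) hh
  have step13 : ∀ x y z, G.Adj x y → G.Adj y z → w x y < w y z →
      Inv13 z (w y z) → Inv13 y (w x y) := by
    intro x y z hxy hyz hlt hI
    refine ⟨fun hy => ?_, fun hy => ?_, fun hy => ?_, fun hy => ?_⟩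
    · subst hy
      rcases N0 z hyz with rfl | rfl
      · rw [hwa] at hlt; exact Or.inl hlt
      · rw [s0q] at hlt
        have hIq := hI.2.2.2 hqc
        rw [s0q] at hIq
        rcases hIq with ⟨h1, _⟩ | ⟨h1, h2⟩
        · exact absurd h1 (lt_irrefl e)
        · exact Or.inr ⟨hlt, h1, h2⟩
    · subst hy
      rcases N2 z hyz with rfl | rfl
      · rw [s21] at hlt; exact Or.inl hlt
      · rw [hwc] at hlt; exact Or.inr hlt
    · subst hy
      rcases N4 z hyz with rfl | rfl
      · rw [s43] at hlt; exact Or.inl hlt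
      · rw [hwf] at hlt
        have hIr := hI.2.2.2 hrc
        rw [hwf] at hIr
        rcases hIr with ⟨h1, h2⟩ | ⟨h1, _⟩
        · exact Or.inr ⟨hlt, h1, h2⟩
        · exact absurd h1 (lt_irrefl f)
    · by_cases hz0 : z = P0
      · subst hz0
        rcases N0 y hyz.symm with rfl | rfl
        · exact absurd (by simp [hC5]) hy
        · rw [hwe] at hlt
          have hI0 := hI.1 rfl
          rw [hwe] at hI0
          rcases hI0 with h1 | ⟨h1, _⟩
          · exact Or.inl ⟨hlt, h1⟩
          · exact absurd h1 (lt_irrefl e)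
      by_cases hz4 : z = P4
      · subst hz4
        rcases N4 y hyz.symm with rfl | rfl
        · exact absurd (by simp [hC5]) hy
        · rw [sr4] at hlt
          have hI4 := hI.2.2.1 rfl
          rw [sr4] at hI4
          rcases hI4 with h1 | ⟨h1, _⟩
          · exact Or.inr ⟨hlt, h1⟩
          · exact absurd h1 (lt_irrefl f)
      by_cases hz1 : z = P1
      · subst hz1
        rcases N1 y hyz.symm with rfl | rfl <;> exact absurd (by simp [hC5]) hy
      by_cases hz2 : z = P2
      · subst hz2
        rcases N2 y hyz.symm with rfl | rfl <;> exact absurd (by simp [hC5]) hy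
      by_cases hz3 : z = P3
      · subst hz3
        rcases N3 y hyz.symm with rfl | rfl <;> exact absurd (by simp [hC5]) hy
      · have hzc : z ∉ C5 := by simp [hC5, hz0, hz1, hz2, hz3, hz4]
        rcases hI.2.2.2 hzc with ⟨h1, h2⟩ | ⟨h1, h2⟩
        · exact Or.inl ⟨hlt.trans h1, h2⟩
        · exact Or.inr ⟨hlt.trans h1, h2⟩
  have key13 := inc_rec ({P1, P3} : Set V) Inv13 base13 step13
  -- ============ W2 : the pair {P1, P3} ============
  have hW2 : (b < c ∧ d < a ∧ e < a) ∨ (c < b ∧ a < e ∧ f < d) := by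
    obtain ⟨l, hchain, hlast, huse⟩ := hgood P1 P3 ne13
    have hlne : l ≠ [] := by
      rintro rfl
      exact ne13 (by simpa using hlast)
    obtain ⟨hv, t, rfl⟩ := List.exists_cons_of_ne_nil hlne
    have hAdj1h : G.Adj P1 hv := (List.isChain_cons_cons.mp hchain).1
    have hfirstmem : (P1, hv) ∈ (P1 :: hv :: t).zip (hv :: t) := by
      rw [List.zip_cons_cons]; exact List.mem_cons_self
    have hfirst := huse (P1, hv) hfirstmem
    obtain ⟨u, hu⟩ := exists_last_pair' (hv :: t) P1 P3 (by simp) hlast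
    have hAdju : G.Adj u P3 := chain'_zip_adj hchain (u, P3) hu
    have hulast := huse (u, P3) hu
    rcases N1 hv hAdj1h with rfl | rfl
    · obtain ⟨l1, hip1, hl1⟩ := hfirst.1
      have hInv := key13 l1 P1 P0 hip1 hl1
      have hI0 := hInv.1 rfl
      rw [s10] at hI0
      rcases hI0 with h1 | ⟨h1, h2, h3⟩
      · exact absurd h1 (lt_irrefl a)
      · rcases N3 u hAdju.symm with rfl | rfl
        · obtain ⟨l2, hip2, hl2⟩ := hulast.2
          have hInv2 := key13 l2 P3 P2 hip2 hl2
          have hI2 := hInv2.2.1 rfl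
          rw [s32] at hI2
          rcases hI2 with h4 | h4
          · exact Or.inr ⟨h4, h1, h3⟩
          · exact absurd h4 (lt_irrefl c)
        · obtain ⟨l2, hip2, hl2⟩ := hulast.2
          have hInv2 := key13 l2 P3 P4 hip2 hl2
          have hI2 := hInv2.2.2.1 rfl
          rw [hwd] at hI2
          rcases hI2 with h4 | ⟨_, h5, h6⟩
          · exact absurd h4 (lt_irrefl d)
          · linarith
    · obtain ⟨l1, hip1, hl1⟩ := hfirst.1
      have hInv := key13 l1 P1 P2 hip1 hl1
      have hIb := hInv.2.1 rfl
      rw [hwb] at hIb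
      rcases hIb with h1 | h1
      · exact absurd h1 (lt_irrefl b)
      · rcases N3 u hAdju.symm with rfl | rfl
        · obtain ⟨l2, hip2, hl2⟩ := hulast.2
          have hInv2 := key13 l2 P3 P2 hip2 hl2
          have hI2 := hInv2.2.1 rfl
          rw [s32] at hI2
          rcases hI2 with h4 | h4
          · linarith
          · exact absurd h4 (lt_irrefl c)
        · obtain ⟨l2, hip2, hl2⟩ := hulast.2
          have hInv2 := key13 l2 P3 P4 hip2 hl2
          have hI2 := hInv2.2.2.1 rfl
          rw [hwd] at hI2
          rcases hI2 with h4 | ⟨h4, h5, h6⟩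
          · exact absurd h4 (lt_irrefl d)
          · exact Or.inl ⟨h1, by linarith, h6⟩
  -- ============ Invariant for target {P0, P2} ============
  let Inv02 : V → ℝ → Prop := fun y m =>
    (y = P1 → (m < a ∨ m < b)) ∧
    (y = P3 → (m < c ∨ (m < d ∧ d < f ∧ f < e))) ∧
    (y = P4 → ((m < d ∧ d < c) ∨ (m < f ∧ f < e))) ∧
    (y ∉ C5 → (m < e ∨ (m < f ∧ f < d ∧ d < c)))
  have base02 : ∀ x y, G.Adj x y → y ∈ ({P0, P2} : Set V) → Inv02 y (w x y) := by
    intro x y _ hy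
    simp only [Set.mem_insert_iff, Set.mem_singleton_iff] at hy
    rcases hy with rfl | rfl
    · refine ⟨fun hh => ?_, fun hh => ?_, fun hh => ?_, fun hh => ?_⟩
      · exact absurd hh ne01
      · exact absurd hh ne03
      · exact absurd hh ne04
      · exact absurd (by simp [hC5]) hh
    · refine ⟨fun hh => ?_, fun hh => ?_, fun hh => ?_, fun hh => ?_⟩
      · exact absurd hh.symm ne12
      · exact absurd hh ne23
      · exact absurd hh ne24
      · exact absurd (by simp [hC5]) hh
  have step02 : ∀ x y z, G.Adj x y → G.Adj y z → w x y < w y z →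
      Inv02 z (w y z) → Inv02 y (w x y) := by
    intro x y z hxy hyz hlt hI
    refine ⟨fun hy => ?_, fun hy => ?_, fun hy => ?_, fun hy => ?_⟩
    · subst hy
      rcases N1 z hyz with rfl | rfl
      · rw [s10] at hlt; exact Or.inl hlt
      · rw [hwb] at hlt; exact Or.inr hlt
    · subst hy
      rcases N3 z hyz with rfl | rfl
      · rw [s32] at hlt; exact Or.inl hlt
      · rw [hwd] at hlt
        have hI4 := hI.2.2.1 rfl
        rw [hwd] at hI4
        rcases hI4 with ⟨h1, _⟩ | ⟨h1, h2⟩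
        · exact absurd h1 (lt_irrefl d)
        · exact Or.inr ⟨hlt, h1, h2⟩
    · subst hy
      rcases N4 z hyz with rfl | rfl
      · rw [s43] at hlt
        have hI3 := hI.2.1 rfl
        rw [s43] at hI3
        rcases hI3 with h1 | ⟨h1, _⟩
        · exact Or.inl ⟨hlt, h1⟩
        · exact absurd h1 (lt_irrefl d)
      · rw [hwf] at hlt
        have hIr := hI.2.2.2 hrc
        rw [hwf] at hIr
        rcases hIr with h1 | ⟨h1, _⟩
        · exact Or.inr ⟨hlt, h1⟩
        · exact absurd h1 (lt_irrefl f)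
    · by_cases hz0 : z = P0
      · subst hz0
        rcases N0 y hyz.symm with rfl | rfl
        · exact absurd (by simp [hC5]) hy
        · rw [hwe] at hlt; exact Or.inl hlt
      by_cases hz4 : z = P4
      · subst hz4
        rcases N4 y hyz.symm with rfl | rfl
        · exact absurd (by simp [hC5]) hy
        · rw [sr4] at hlt
          have hI4 := hI.2.2.1 rfl
          rw [sr4] at hI4
          rcases hI4 with ⟨h1, h2⟩ | ⟨h1, _⟩
          · exact Or.inr ⟨hlt, h1, h2⟩
          · exact absurd h1 (lt_irrefl f)
      by_cases hz1 : z = P1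
      · subst hz1
        rcases N1 y hyz.symm with rfl | rfl <;> exact absurd (by simp [hC5]) hy
      by_cases hz2 : z = P2
      · subst hz2
        rcases N2 y hyz.symm with rfl | rfl <;> exact absurd (by simp [hC5]) hy
      by_cases hz3 : z = P3
      · subst hz3
        rcases N3 y hyz.symm with rfl | rfl <;> exact absurd (by simp [hC5]) hy
      · have hzc : z ∉ C5 := by simp [hC5, hz0, hz1, hz2, hz3, hz4]
        rcases hI.2.2.2 hzc with h1 | ⟨h1, h2, h3⟩
        · exact Or.inl (hlt.trans h1)
        · exact Or.inr ⟨hlt.trans h1, h2, h3⟩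
  have key02 := inc_rec ({P0, P2} : Set V) Inv02 base02 step02
  -- ============ W1 : the pair {P0, P2} ============
  have hW1 : a < b ∨ e < c := by
    obtain ⟨l, hchain, hlast, huse⟩ := hgood P0 P2 ne02
    have hlne : l ≠ [] := by
      rintro rfl
      exact ne02 (by simpa using hlast)
    obtain ⟨hv, t, rfl⟩ := List.exists_cons_of_ne_nil hlne
    have hAdj0h : G.Adj P0 hv := (List.isChain_cons_cons.mp hchain).1
    have hfirstmem : (P0, hv) ∈ (P0 :: hv :: t).zip (hv :: t) := by
      rw [List.zip_cons_cons]; exact List.mem_cons_self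
    have hfirst := huse (P0, hv) hfirstmem
    rcases N0 hv hAdj0h with rfl | rfl
    · obtain ⟨l1, hip1, hl1⟩ := hfirst.1
      have hInv := key02 l1 P0 P1 hip1 hl1
      have hI := hInv.1 rfl
      rw [hwa] at hI
      rcases hI with h1 | h1
      · exact absurd h1 (lt_irrefl a)
      · exact Or.inl h1
    · obtain ⟨l1, hip1, hl1⟩ := hfirst.1
      have hInv := key02 l1 P0 hv hip1 hl1
      have hI := hInv.2.2.2 hqc
      rw [s0q] at hI
      rcases hI with h1 | ⟨_, h2, h3⟩
      · exact absurd h1 (lt_irrefl e)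
      · exact Or.inr (by linarith)
  -- ============ Invariant for target {P2, P4} ============
  let Inv24 : V → ℝ → Prop := fun y m =>
    (y = P0 → ((m < a ∧ a < b) ∨ (m < e ∧ e < f))) ∧
    (y = P1 → (m < b ∨ (m < a ∧ a < e ∧ e < f))) ∧
    (y = P3 → (m < c ∨ m < d)) ∧
    (y ∉ C5 → (m < f ∨ (m < e ∧ e < a ∧ a < b)))
  have base24 : ∀ x y, G.Adj x y → y ∈ ({P2, P4} : Set V) → Inv24 y (w x y) := by
    intro x y _ hy
    simp only [Set.mem_insert_iff, Set.mem_singleton_iff] at hy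
    rcases hy with rfl | rfl
    · refine ⟨fun hh => ?_, fun hh => ?_, fun hh => ?_, fun hh => ?_⟩
      · exact absurd hh.symm ne02
      · exact absurd hh.symm ne12
      · exact absurd hh ne23
      · exact absurd (by simp [hC5]) hh
    · refine ⟨fun hh => ?_, fun hh => ?_, fun hh => ?_, fun hh => ?_⟩
      · exact absurd hh.symm ne04
      · exact absurd hh.symm ne14
      · exact absurd hh.symm ne34
      · exact absurd (by simp [hC5]) hh
  have step24 : ∀ x y z, G.Adj x y → G.Adj y z → w x y < w y z →
      Inv24 z (w y z) → Inv24 y (w x y) := by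
    intro x y z hxy hyz hlt hI
    refine ⟨fun hy => ?_, fun hy => ?_, fun hy => ?_, fun hy => ?_⟩
    · subst hy
      rcases N0 z hyz with rfl | rfl
      · rw [hwa] at hlt
        have hI1 := hI.2.1 rfl
        rw [hwa] at hI1
        rcases hI1 with h1 | ⟨h1, _⟩
        · exact Or.inl ⟨hlt, h1⟩
        · exact absurd h1 (lt_irrefl a)
      · rw [s0q] at hlt
        have hIq := hI.2.2.2 hqc
        rw [s0q] at hIq
        rcases hIq with h1 | ⟨h1, _⟩
        · exact Or.inr ⟨hlt, h1⟩
        · exact absurd h1 (lt_irrefl e)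
    · subst hy
      rcases N1 z hyz with rfl | rfl
      · rw [s10] at hlt
        have hI0 := hI.1 rfl
        rw [s10] at hI0
        rcases hI0 with ⟨h1, _⟩ | ⟨h1, h2⟩
        · exact absurd h1 (lt_irrefl a)
        · exact Or.inr ⟨hlt, h1, h2⟩
      · rw [hwb] at hlt; exact Or.inl hlt
    · subst hy
      rcases N3 z hyz with rfl | rfl
      · rw [s32] at hlt; exact Or.inl hlt
      · rw [hwd] at hlt; exact Or.inr hlt
    · by_cases hz0 : z = P0
      · subst hz0
        rcases N0 y hyz.symm with rfl | rfl
        · exact absurd (by simp [hC5]) hy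
        · rw [hwe] at hlt
          have hI0 := hI.1 rfl
          rw [hwe] at hI0
          rcases hI0 with ⟨h1, h2⟩ | ⟨h1, _⟩
          · exact Or.inr ⟨hlt, h1, h2⟩
          · exact absurd h1 (lt_irrefl e)
      by_cases hz4 : z = P4
      · subst hz4
        rcases N4 y hyz.symm with rfl | rfl
        · exact absurd (by simp [hC5]) hy
        · rw [sr4] at hlt; exact Or.inl hlt
      by_cases hz1 : z = P1
      · subst hz1
        rcases N1 y hyz.symm with rfl | rfl <;> exact absurd (by simp [hC5]) hy
      by_cases hz2 : z = P2
      · subst hz2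
        rcases N2 y hyz.symm with rfl | rfl <;> exact absurd (by simp [hC5]) hy
      by_cases hz3 : z = P3
      · subst hz3
        rcases N3 y hyz.symm with rfl | rfl <;> exact absurd (by simp [hC5]) hy
      · have hzc : z ∉ C5 := by simp [hC5, hz0, hz1, hz2, hz3, hz4]
        rcases hI.2.2.2 hzc with h1 | ⟨h1, h2, h3⟩
        · exact Or.inl (hlt.trans h1)
        · exact Or.inr ⟨hlt.trans h1, h2, h3⟩
  have key24 := inc_rec ({P2, P4} : Set V) Inv24 base24 step24
  -- ============ W3 : the pair {P2, P4} ============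
  have hW3 : (c < d ∧ a < b) ∨ (b < a ∧ a < e) := by
    obtain ⟨l, hchain, hlast, huse⟩ := hgood P2 P4 ne24
    have hlne : l ≠ [] := by
      rintro rfl
      exact ne24 (by simpa using hlast)
    obtain ⟨hv, t, rfl⟩ := List.exists_cons_of_ne_nil hlne
    have hAdj2h : G.Adj P2 hv := (List.isChain_cons_cons.mp hchain).1
    have hfirstmem : (P2, hv) ∈ (P2 :: hv :: t).zip (hv :: t) := by
      rw [List.zip_cons_cons]; exact List.mem_cons_self
    have hfirst := huse (P2, hv) hfirstmem
    obtain ⟨u, hu⟩ := exists_last_pair' (hv :: t) P2 P4 (by simp) hlast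
    have hAdju : G.Adj u P4 := chain'_zip_adj hchain (u, P4) hu
    have hulast := huse (u, P4) hu
    rcases N2 hv hAdj2h with rfl | rfl
    · obtain ⟨l1, hip1, hl1⟩ := hfirst.1
      have hInv := key24 l1 P2 P1 hip1 hl1
      have hI := hInv.2.1 rfl
      rw [s21] at hI
      rcases hI with h1 | ⟨h1, h2, _⟩
      · exact absurd h1 (lt_irrefl b)
      · exact Or.inr ⟨h1, h2⟩
    · obtain ⟨l1, hip1, hl1⟩ := hfirst.1
      have hInv := key24 l1 P2 P3 hip1 hl1
      have hI := hInv.2.2.1 rfl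
      rw [hwc] at hI
      rcases hI with h1 | hcd
      · exact absurd h1 (lt_irrefl c)
      · rcases N4 u hAdju.symm with rfl | rfl
        · obtain ⟨l2, hip2, hl2⟩ := hulast.2
          have hInv2 := key24 l2 P4 P3 hip2 hl2
          have hI2 := hInv2.2.2.1 rfl
          rw [s43] at hI2
          rcases hI2 with h4 | h4
          · linarith
          · exact absurd h4 (lt_irrefl d)
        · obtain ⟨l2, hip2, hl2⟩ := hulast.2
          have hInv2 := key24 l2 P4 u hip2 hl2
          have hI2 := hInv2.2.2.2 hrc
          rw [hwf] at hI2
          rcases hI2 with h4 | ⟨_, _, h6⟩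
          · exact absurd h4 (lt_irrefl f)
          · exact Or.inl ⟨hcd, h6⟩
  -- ============ Invariant for target {P0, P3} ============
  let Inv03 : V → ℝ → Prop := fun y m =>
    (y = P1 → (m < a ∨ (m < b ∧ b < c))) ∧
    (y = P2 → (m < c ∨ (m < b ∧ b < a))) ∧
    (y = P4 → (m < d ∨ (m < f ∧ f < e))) ∧
    (y ∉ C5 → (m < e ∨ (m < f ∧ f < d)))
  have base03 : ∀ x y, G.Adj x y → y ∈ ({P0, P3} : Set V) → Inv03 y (w x y) := by
    intro x y _ hy
    simp only [Set.mem_insert_iff, Set.mem_singleton_iff] at hy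
    rcases hy with rfl | rfl
    · refine ⟨fun hh => ?_, fun hh => ?_, fun hh => ?_, fun hh => ?_⟩
      · exact absurd hh ne01
      · exact absurd hh ne02
      · exact absurd hh ne04
      · exact absurd (by simp [hC5]) hh
    · refine ⟨fun hh => ?_, fun hh => ?_, fun hh => ?_, fun hh => ?_⟩
      · exact absurd hh.symm ne13
      · exact absurd hh.symm ne23
      · exact absurd hh ne34
      · exact absurd (by simp [hC5]) hh
  have step03 : ∀ x y z, G.Adj x y → G.Adj y z → w x y < w y z →
      Inv03 z (w y z) → Inv03 y (w x y) := by
    intro x y z hxy hyz hlt hI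
    refine ⟨fun hy => ?_, fun hy => ?_, fun hy => ?_, fun hy => ?_⟩
    · subst hy
      rcases N1 z hyz with rfl | rfl
      · rw [s10] at hlt; exact Or.inl hlt
      · rw [hwb] at hlt
        have hI2 := hI.2.1 rfl
        rw [hwb] at hI2
        rcases hI2 with h1 | ⟨h1, _⟩
        · exact Or.inr ⟨hlt, h1⟩
        · exact absurd h1 (lt_irrefl b)
    · subst hy
      rcases N2 z hyz with rfl | rfl
      · rw [s21] at hlt
        have hI1 := hI.1 rfl
        rw [s21] at hI1
        rcases hI1 with h1 | ⟨h1, _⟩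
        · exact Or.inr ⟨hlt, h1⟩
        · exact absurd h1 (lt_irrefl b)
      · rw [hwc] at hlt; exact Or.inl hlt
    · subst hy
      rcases N4 z hyz with rfl | rfl
      · rw [s43] at hlt; exact Or.inl hlt
      · rw [hwf] at hlt
        have hIr := hI.2.2.2 hrc
        rw [hwf] at hIr
        rcases hIr with h1 | ⟨h1, _⟩
        · exact Or.inr ⟨hlt, h1⟩
        · exact absurd h1 (lt_irrefl f)
    · by_cases hz0 : z = P0
      · subst hz0
        rcases N0 y hyz.symm with rfl | rfl
        · exact absurd (by simp [hC5]) hy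
        · rw [hwe] at hlt; exact Or.inl hlt
      by_cases hz4 : z = P4
      · subst hz4
        rcases N4 y hyz.symm with rfl | rfl
        · exact absurd (by simp [hC5]) hy
        · rw [sr4] at hlt
          have hI4 := hI.2.2.1 rfl
          rw [sr4] at hI4
          rcases hI4 with h1 | ⟨h1, _⟩
          · exact Or.inr ⟨hlt, h1⟩
          · exact absurd h1 (lt_irrefl f)
      by_cases hz1 : z = P1
      · subst hz1
        rcases N1 y hyz.symm with rfl | rfl <;> exact absurd (by simp [hC5]) hy
      by_cases hz2 : z = P2
      · subst hz2
        rcases N2 y hyz.symm with rfl | rfl <;> exact absurd (by simp [hC5]) hy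
      by_cases hz3 : z = P3
      · subst hz3
        rcases N3 y hyz.symm with rfl | rfl <;> exact absurd (by simp [hC5]) hy
      · have hzc : z ∉ C5 := by simp [hC5, hz0, hz1, hz2, hz3, hz4]
        rcases hI.2.2.2 hzc with h1 | ⟨h1, h2⟩
        · exact Or.inl (hlt.trans h1)
        · exact Or.inr ⟨hlt.trans h1, h2⟩
  have key03 := inc_rec ({P0, P3} : Set V) Inv03 base03 step03
  -- ============ endgame : the pair {P0, P3} ============
  have hP1end : a < b → f < d → False := by
    intro hab hfd
    obtain ⟨l, hchain, hlast, huse⟩ := hgood P0 P3 ne03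
    have hlne : l ≠ [] := by
      rintro rfl
      exact ne03 (by simpa using hlast)
    obtain ⟨hv, t, rfl⟩ := List.exists_cons_of_ne_nil hlne
    obtain ⟨u, hu⟩ := exists_last_pair' (hv :: t) P0 P3 (by simp) hlast
    have hAdju : G.Adj u P3 := chain'_zip_adj hchain (u, P3) hu
    have hulast := huse (u, P3) hu
    rcases N3 u hAdju.symm with rfl | rfl
    · obtain ⟨l2, hip2, hl2⟩ := hulast.2
      have hInv2 := key03 l2 P3 P2 hip2 hl2
      have hI2 := hInv2.2.1 rfl
      rw [s32] at hI2
      rcases hI2 with h4 | ⟨_, h5⟩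
      · exact absurd h4 (lt_irrefl c)
      · linarith
    · obtain ⟨l2, hip2, hl2⟩ := hulast.2
      have hInv2 := key03 l2 P3 P4 hip2 hl2
      have hI2 := hInv2.2.2.1 rfl
      rw [hwd] at hI2
      rcases hI2 with h4 | ⟨h4, _⟩
      · exact absurd h4 (lt_irrefl d)
      · linarith
  -- ============ putting everything together ============
  rcases hW2 with ⟨hbc, hda, hea⟩ | ⟨hcb, hae, hfd⟩
  · rcases hW3 with ⟨hcd, hab⟩ | ⟨hba, hae2⟩
    · linarith
    · linarith
  · rcases hW1 with hab | hec
    · exact hP1end hab hfd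
    · exact hP1end (by linarith) hfd
end

section
/- A cycle graph on n ≥ 4 vertices with distinct edge weights is not a good graph: there exist two non-adjacent vertices A, B such that no path between them consists entirely of edges useful with respect to {A,B}. -/
variable {V : Type}

/-- The cycle graph on `Fin n`: `i` is adjacent to `i ± 1` (mod n). -/
def cycleG (n : ℕ) : SimpleGraph (Fin n) :=
  SimpleGraph.fromRel (fun i j => (j : ℕ) = ((i : ℕ) + 1) % n)

lemma cycleG_adj {n : ℕ} {i j : Fin n} :
    (cycleG n).Adj i j ↔ i ≠ j ∧
      ((j : ℕ) = ((i : ℕ) + 1) % n ∨ (i : ℕ) = ((j : ℕ) + 1) % n) := by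
  rw [cycleG, SimpleGraph.fromRel_adj]

/-- If from `v` there is no edge with weight bigger than `w u v`, and `v ∉ {A,B}`, then no
increasing path starting with `u, v` reaches `A` or `B`. -/
lemma stuck_lemma (G : SimpleGraph V) (w : V → V → ℝ) (A B u v : V)
    (hvA : v ≠ A) (hvB : v ≠ B) (h : ∀ x, G.Adj v x → ¬ w u v < w v x) :
    ¬ ∃ l : List V, IncPath G w (u :: v :: l) ∧
      (u :: v :: l).getLast (by simp) ∈ ({A, B} : Set V) := by
  rintro ⟨l, ⟨hadj, hinc⟩, hlast⟩
  match l with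
  | [] =>
    have : v = A ∨ v = B := by simpa using hlast
    rcases this with h1 | h1
    · exact hvA h1
    · exact hvB h1
  | x :: l' =>
    have hAdj : G.Adj v x := (List.isChain_cons_cons.mp (List.isChain_cons_cons.mp hadj).2).1
    have hW : w u v < w v x := by
      have h2 : List.Chain' (· < ·) (w u v :: w v x :: wlist w (x :: l')) := hinc
      exact (List.isChain_cons_cons.mp h2).1
    exact h x hAdj hW

/-- A walk which starts in `P` and ends outside of `P` must have a step leaving `P`. -/
lemma exists_cross (P : V → Prop) :
    ∀ (A : V) (l : List V), P A → ¬ P ((A :: l).getLast (by simp)) →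
      ∃ p ∈ (A :: l).zip l, P p.1 ∧ ¬ P p.2 := by
  intro A l
  induction l generalizing A with
  | nil =>
    intro h1 h2
    simp only [List.getLast_singleton] at h2
    exact absurd h1 h2
  | cons x t ih =>
    intro h1 h2
    by_cases hx : P x
    · obtain ⟨p, hp, h3, h4⟩ := ih x hx (by
        rwa [List.getLast_cons (by simp)] at h2)
      exact ⟨p, by rw [List.zip_cons_cons, List.mem_cons]; exact Or.inr hp, h3, h4⟩
    · exact ⟨(A, x), by rw [List.zip_cons_cons, List.mem_cons]; exact Or.inl rfl, h1, hx⟩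

/-- A cycle graph on at least 4 vertices with distinct edge weights is not good: some two
non-adjacent vertices are joined by no path of useful edges. -/
theorem cycle_graph_not_good (n : ℕ) (hn : 4 ≤ n) (w : Fin n → Fin n → ℝ)
    (hsymm : ∀ a b, w a b = w b a)
    (hdist : ∀ a b c d, (cycleG n).Adj a b → (cycleG n).Adj c d → w a b = w c d →
      (a = c ∧ b = d) ∨ (a = d ∧ b = c)) :
    ∃ A B : Fin n, A ≠ B ∧ ¬(cycleG n).Adj A B ∧
      ¬∃ l : List (Fin n),
        List.Chain' (cycleG n).Adj (A :: l) ∧ (A :: l).getLast (by simp) = B ∧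
        ∀ p ∈ (A :: l).zip l, Useful (cycleG n) w A B p.1 p.2 := by
  classical
  have h0 : 0 < n := by omega
  set f : ℕ → Fin n := fun k => ⟨k % n, Nat.mod_lt k h0⟩ with hf
  have fval : ∀ k, (f k : ℕ) = k % n := fun _ => rfl
  have fcast : ∀ k, k < n → (f k : ℕ) = k := fun k hk => Nat.mod_eq_of_lt hk
  have fne : ∀ k m, k < n → m < n → k ≠ m → f k ≠ f m := by
    intro k m hk hm hkm he
    have h1 := congrArg Fin.val he
    rw [fcast k hk, fcast m hm] at h1
    exact hkm h1
  have adjc : ∀ k, (cycleG n).Adj (f k) (f (k + 1)) := by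
    intro k
    have h3 : (k + 1) % n = (k % n + 1) % n := by
      conv_lhs => rw [Nat.add_mod]
      rw [Nat.mod_eq_of_lt (show 1 < n by omega)]
    rw [cycleG_adj]
    have hb : k % n < n := Nat.mod_lt k h0
    constructor
    · intro he
      have hv : k % n = (k + 1) % n := congrArg Fin.val he
      rw [h3] at hv
      rcases Nat.lt_or_ge (k % n + 1) n with hlt | hge
      · rw [Nat.mod_eq_of_lt hlt] at hv; omega
      · have hb2 : k % n + 1 = n := by omega
        rw [hb2, Nat.mod_self] at hv; omega
    · left
      show (k + 1) % n = (k % n + 1) % n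
      exact h3
  have nbr2 : ∀ (k : ℕ) (x : Fin n), 1 ≤ k → k < n → (cycleG n).Adj (f k) x →
      x = f (k + 1) ∨ x = f (k - 1) := by
    intro k x hk1 hkn hadj
    rcases (cycleG_adj.mp hadj).2 with h | h
    · left
      apply Fin.ext
      rw [h, fcast k hkn]
    · right
      rw [fcast k hkn] at h
      have hx : (x : ℕ) < n := x.isLt
      apply Fin.ext
      rcases Nat.lt_or_ge ((x : ℕ) + 1) n with hlt | hge
      · rw [Nat.mod_eq_of_lt hlt] at h
        rw [fcast (k - 1) (by omega)]
        omega
      · have hb2 : (x : ℕ) + 1 = n := by omega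
        rw [hb2, Nat.mod_self] at h
        omega
  -- distinctness of the two smallest edges
  have hW01 : w (f 0) (f 1) ≠ w (f 1) (f 2) := by
    intro hEq
    rcases hdist (f 0) (f 1) (f 1) (f 2) (adjc 0) (adjc 1) hEq with ⟨h1, _⟩ | ⟨h1, _⟩
    · have h2 := congrArg Fin.val h1
      rw [fcast 0 (by omega), fcast 1 (by omega)] at h2
      omega
    · have h2 := congrArg Fin.val h1
      rw [fcast 0 (by omega), fcast 2 (by omega)] at h2
      omega
  -- the not useful edge of the short arc
  obtain ⟨a1, ha1, hNU1⟩ : ∃ a1, a1 ≤ 1 ∧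
      ¬ Useful (cycleG n) w (f 0) (f 2) (f a1) (f (a1 + 1)) := by
    rcases lt_trichotomy (w (f 0) (f 1)) (w (f 1) (f 2)) with hc | hc | hc
    · refine ⟨1, le_refl 1, fun hU => ?_⟩
      refine stuck_lemma (cycleG n) w (f 0) (f 2) (f 2) (f 1)
        (fne 1 0 (by omega) (by omega) (by omega))
        (fne 1 2 (by omega) (by omega) (by omega)) ?_ hU.2
      intro x hx
      rcases nbr2 1 x (by omega) (by omega) hx with h | h
      · rw [h, hsymm (f 2) (f 1)]
        exact lt_irrefl _
      · rw [h, hsymm (f 2) (f 1), hsymm (f 1) (f 0)]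
        exact not_lt.mpr (le_of_lt hc)
    · exact absurd hc hW01
    · refine ⟨0, by omega, fun hU => ?_⟩
      refine stuck_lemma (cycleG n) w (f 0) (f 2) (f 0) (f 1)
        (fne 1 0 (by omega) (by omega) (by omega))
        (fne 1 2 (by omega) (by omega) (by omega)) ?_ hU.1
      intro x hx
      rcases nbr2 1 x (by omega) (by omega) hx with h | h
      · rw [h]
        exact not_lt.mpr (le_of_lt hc)
      · rw [h, hsymm (f 1) (f 0)]
        exact lt_irrefl _
  -- the not useful edge of the long arc
  obtain ⟨a2, hmem, hmax⟩ := Finset.exists_max_image (Finset.Icc 2 (n - 1))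
      (fun k => w (f k) (f (k + 1))) ⟨2, Finset.mem_Icc.mpr ⟨le_refl 2, by omega⟩⟩
  rw [Finset.mem_Icc] at hmem
  obtain ⟨ha2l, ha2r⟩ := hmem
  have hNU2 : ¬ Useful (cycleG n) w (f 0) (f 2) (f (a2 + 1)) (f a2) := by
    rcases eq_or_lt_of_le ha2l with he2 | h3le
    · subst he2
      intro hU
      refine stuck_lemma (cycleG n) w (f 0) (f 2) (f 2) (f 3)
        (fne 3 0 (by omega) (by omega) (by omega))
        (fne 3 2 (by omega) (by omega) (by omega)) ?_ hU.2
      intro x hx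
      rcases nbr2 3 x (by omega) (by omega) hx with h | h
      · rw [h]
        exact not_lt.mpr (hmax 3 (Finset.mem_Icc.mpr ⟨by omega, by omega⟩))
      · rw [h, hsymm (f 3) (f 2)]
        exact lt_irrefl _
    · intro hU
      refine stuck_lemma (cycleG n) w (f 0) (f 2) (f (a2 + 1)) (f a2)
        (fne a2 0 (by omega) (by omega) (by omega))
        (fne a2 2 (by omega) (by omega) (by omega)) ?_ hU.1
      intro x hx
      rcases nbr2 a2 x (by omega) (by omega) hx with h | h
      · rw [h, hsymm (f (a2 + 1)) (f a2)]
        exact lt_irrefl _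
      · rw [h, hsymm (f (a2 + 1)) (f a2), hsymm (f a2) (f (a2 - 1))]
        have hle : w (f (a2 - 1)) (f a2) ≤ w (f a2) (f (a2 + 1)) := by
          have h4 := hmax (a2 - 1) (Finset.mem_Icc.mpr ⟨by omega, by omega⟩)
          rwa [show a2 - 1 + 1 = a2 by omega] at h4
        exact not_lt.mpr hle
  refine ⟨f 0, f 2, fne 0 2 (by omega) (by omega) (by omega), ?_, ?_⟩
  · rw [cycleG_adj]
    rintro ⟨-, hd | hd⟩
    · rw [fcast 2 (by omega), fcast 0 (by omega),
        Nat.mod_eq_of_lt (show 0 + 1 < n by omega)] at hd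
      omega
    · rw [fcast 0 (by omega), fcast 2 (by omega),
        Nat.mod_eq_of_lt (show 2 + 1 < n by omega)] at hd
      omega
  · rintro ⟨l, hchain, hlast, huse⟩
    have hPA : ((f 0 : Fin n) : ℕ) ≤ a1 ∨ a2 < ((f 0 : Fin n) : ℕ) :=
      Or.inl (by rw [fcast 0 (by omega)]; omega)
    have hPB : ¬ (((f 2 : Fin n) : ℕ) ≤ a1 ∨ a2 < ((f 2 : Fin n) : ℕ)) := by
      rw [fcast 2 (by omega)]
      omega
    obtain ⟨p, hpmem, hPu, hPv⟩ :=
      exists_cross (fun v : Fin n => (v : ℕ) ≤ a1 ∨ a2 < (v : ℕ)) (f 0) l hPA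
        (by rw [hlast]; exact hPB)
    have hU := huse p hpmem
    have hadjp : (cycleG n).Adj p.1 p.2 := by
      obtain ⟨⟨l1, ⟨hc, _⟩, _⟩, _⟩ := hU
      exact (List.isChain_cons_cons.mp hc).1
    obtain ⟨-, hrel⟩ := cycleG_adj.mp hadjp
    have hp1 : (p.1 : ℕ) < n := p.1.isLt
    have hp2 : (p.2 : ℕ) < n := p.2.isLt
    push_neg at hPv
    have hkey : (p.1 = f a1 ∧ p.2 = f (a1 + 1)) ∨ (p.1 = f (a2 + 1) ∧ p.2 = f a2) := by
      rcases hrel with h | h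
      · rcases Nat.lt_or_ge ((p.1 : ℕ) + 1) n with hlt | hge
        · rw [Nat.mod_eq_of_lt hlt] at h
          left
          constructor <;> apply Fin.ext
          · rw [fcast a1 (by omega)]; omega
          · rw [fcast (a1 + 1) (by omega)]; omega
        · rw [show (p.1 : ℕ) + 1 = n by omega, Nat.mod_self] at h
          exfalso; omega
      · rcases Nat.lt_or_ge ((p.2 : ℕ) + 1) n with hlt | hge
        · rw [Nat.mod_eq_of_lt hlt] at h
          right
          constructor <;> apply Fin.ext
          · rw [fcast (a2 + 1) (by omega)]; omega
          · rw [fcast a2 (by omega)]; omega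
        · rw [show (p.2 : ℕ) + 1 = n by omega, Nat.mod_self] at h
          right
          constructor <;> apply Fin.ext
          · show (p.1 : ℕ) = (a2 + 1) % n
            rw [show a2 + 1 = n by omega, Nat.mod_self]
            omega
          · rw [fcast a2 (by omega)]; omega
    rcases hkey with ⟨h1, h2⟩ | ⟨h1, h2⟩
    · rw [h1, h2] at hU; exact hNU1 hU
    · rw [h1, h2] at hU; exact hNU2 hU
end
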